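/- arXiv:2211.04499 — 5 statements merged into one kernel-verified Lean document; each statement's English description precedes it below -/
import Mathlib

section
/- For any finite simple graph G with at least one edge, the fractional chromatic number of G satisfies χ_f(G) ≥ 1 + max{ s⁺(G)/s⁻(G), s⁻(G)/s⁺(G) }. -/
open Matrix Finset

namespace SpectralFrac

variable {V : Type*}

/-- The real adjacency matrix of a simple graph is Hermitian. -/
theorem adjMatrix_isHermitian [Fintype V] [DecidableEq V] (G : SimpleGraph V)
    [DecidableRel G.Adj] : (G.adjMatrix ℝ).IsHermitian := by
  rw [Matrix.IsHermitian, Matrix.conjTranspose_eq_transpose_of_trivial]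
  exact G.isSymm_adjMatrix

/-- `s⁺(G)`: the sum of the squares of the positive eigenvalues of the adjacency matrix. -/
noncomputable def sPos [Fintype V] [DecidableEq V] (G : SimpleGraph V) [DecidableRel G.Adj] : ℝ :=
  ∑ i, if 0 < (adjMatrix_isHermitian G).eigenvalues i
    then ((adjMatrix_isHermitian G).eigenvalues i) ^ 2 else 0

/-- `s⁻(G)`: the sum of the squares of the negative eigenvalues of the adjacency matrix. -/
noncomputable def sNeg [Fintype V] [DecidableEq V] (G : SimpleGraph V) [DecidableRel G.Adj] : ℝ :=
  ∑ i, if (adjMatrix_isHermitian G).eigenvalues i < 0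
    then ((adjMatrix_isHermitian G).eigenvalues i) ^ 2 else 0

/-- The largest eigenvalue of the adjacency matrix of `G`. -/
noncomputable def lamMax [Fintype V] [DecidableEq V] (G : SimpleGraph V) [DecidableRel G.Adj] : ℝ :=
  ⨆ i, (adjMatrix_isHermitian G).eigenvalues i

/-- The smallest eigenvalue of the adjacency matrix of `G`. -/
noncomputable def lamMin [Fintype V] [DecidableEq V] (G : SimpleGraph V) [DecidableRel G.Adj] : ℝ :=
  ⨅ i, (adjMatrix_isHermitian G).eigenvalues i

/-- A graph is edge-transitive if its automorphism group acts transitively on edges. -/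
def IsEdgeTransitive (H : SimpleGraph V) : Prop :=
  ∀ ⦃u v x y : V⦄, H.Adj u v → H.Adj x y → ∃ π : H ≃g H, s(π u, π v) = s(x, y)

/-- A graph is vertex-transitive if its automorphism group acts transitively on vertices. -/
def IsVertexTransitive (H : SimpleGraph V) : Prop :=
  ∀ u v : V, ∃ π : H ≃g H, π u = v

/-- The Kneser graph `K_{n;k}`: vertices are `k`-subsets of an `n`-set, adjacent iff disjoint. -/
def kneserGraph (n k : ℕ) : SimpleGraph {s : Finset (Fin n) // s.card = k} where
  Adj a b := a ≠ b ∧ Disjoint a.1 b.1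
  symm := ⟨fun a b h => ⟨h.1.symm, h.2.symm⟩⟩
  loopless := ⟨fun a h => h.1 rfl⟩

instance kneserGraph.adjDecidable (n k : ℕ) : DecidableRel (kneserGraph n k).Adj :=
  fun a b => inferInstanceAs (Decidable (a ≠ b ∧ Disjoint a.1 b.1))

/-- The fractional chromatic number: the infimum of `n / k` over all pairs `(n, k)` such that
`G` admits a homomorphism into the Kneser graph `K_{n;k}`. -/
noncomputable def fracChromaticNumber (G : SimpleGraph V) : ℝ :=
  sInf {q : ℝ | ∃ n k : ℕ, 0 < k ∧ Nonempty (G →g kneserGraph n k) ∧ q = (n : ℝ) / k}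

/-- The automorphism group of `H`, as a finset of permutations of the vertices. -/
def autSet [Fintype V] [DecidableEq V] (H : SimpleGraph V) [DecidableRel H.Adj] :
    Finset (Equiv.Perm V) :=
  Finset.univ.filter fun π => ∀ u v, H.Adj (π u) (π v) ↔ H.Adj u v

end SpectralFrac

namespace SpectralFrac

-- ===== auxiliary lemmas (mine) =====

private lemma swap4' {V W : Type*} [Fintype V] [Fintype W] (F : V → V → W → W → ℝ) :
    ∑ u, ∑ v, ∑ i, ∑ j, F u v i j = ∑ i, ∑ j, ∑ u, ∑ v, F u v i j :=
  calc ∑ u, ∑ v, ∑ i, ∑ j, F u v i j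
      = ∑ u, ∑ i, ∑ v, ∑ j, F u v i j :=
        Finset.sum_congr rfl fun _ _ => Finset.sum_comm
    _ = ∑ i, ∑ u, ∑ v, ∑ j, F u v i j := Finset.sum_comm
    _ = ∑ i, ∑ u, ∑ j, ∑ v, F u v i j :=
        Finset.sum_congr rfl fun _ _ => Finset.sum_congr rfl fun _ _ => Finset.sum_comm
    _ = ∑ i, ∑ j, ∑ u, ∑ v, F u v i j :=
        Finset.sum_congr rfl fun _ _ => Finset.sum_comm

private lemma master_swap' {V : Type*} [Fintype V] (U : Matrix V V ℝ) (R : V → V → ℝ)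
    (f g : V → ℝ) :
    ∑ u, ∑ v, R u v * ((∑ i, f i * (U u i * U v i)) * (∑ j, g j * (U u j * U v j)))
      = ∑ i, ∑ j, (f i * g j) * (∑ u, ∑ v, R u v * ((U u i * U u j) * (U v i * U v j))) := by
  have h1 : ∀ u v, R u v * ((∑ i, f i * (U u i * U v i)) * (∑ j, g j * (U u j * U v j)))
      = ∑ i, ∑ j, (f i * g j) * (R u v * ((U u i * U u j) * (U v i * U v j))) := by
    intro u v
    rw [Finset.sum_mul_sum, Finset.mul_sum]
    refine Finset.sum_congr rfl fun i _ => ?_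
    rw [Finset.mul_sum]
    exact Finset.sum_congr rfl fun j _ => by ring
  calc ∑ u, ∑ v, R u v * ((∑ i, f i * (U u i * U v i)) * (∑ j, g j * (U u j * U v j)))
      = ∑ u, ∑ v, ∑ i, ∑ j, (f i * g j) * (R u v * ((U u i * U u j) * (U v i * U v j))) := by
        refine Finset.sum_congr rfl fun u _ => Finset.sum_congr rfl fun v _ => h1 u v
    _ = ∑ i, ∑ j, ∑ u, ∑ v, (f i * g j) * (R u v * ((U u i * U u j) * (U v i * U v j))) :=
        swap4' _
    _ = ∑ i, ∑ j, (f i * g j) * (∑ u, ∑ v, R u v * ((U u i * U u j) * (U v i * U v j))) := by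
        refine Finset.sum_congr rfl fun i _ => Finset.sum_congr rfl fun j _ => ?_
        rw [Finset.mul_sum]
        exact Finset.sum_congr rfl fun u _ => (Finset.mul_sum _ _ _).symm

private lemma pair_sum' {V : Type*} [Fintype V] [DecidableEq V] (U : Matrix V V ℝ)
    (horth : ∀ i j, (∑ u, U u i * U u j) = if i = j then (1:ℝ) else 0) (f g : V → ℝ) :
    ∑ u, ∑ v, (∑ i, f i * (U u i * U v i)) * (∑ j, g j * (U u j * U v j)) = ∑ i, f i * g i := by
  have h := master_swap' U (fun _ _ => 1) f g
  simp only [one_mul] at h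
  rw [h]
  have h2 : ∀ i j, (∑ u, ∑ v, (U u i * U u j) * (U v i * U v j))
      = if i = j then (1:ℝ) else 0 := by
    intro i j
    rw [← Finset.sum_mul_sum, horth i j]
    split_ifs <;> norm_num
  calc ∑ i, ∑ j, (f i * g j) * (∑ u, ∑ v, (U u i * U u j) * (U v i * U v j))
      = ∑ i, ∑ j, (if i = j then f i * g j else 0) := by
        refine Finset.sum_congr rfl fun i _ => Finset.sum_congr rfl fun j _ => ?_
        rw [h2 i j]
        split_ifs <;> simp
    _ = ∑ i, f i * g i := by
        refine Finset.sum_congr rfl fun i _ => ?_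
        simp [Finset.sum_ite_eq]

private lemma qform_nonneg' {V : Type*} [Fintype V] {n k : ℕ} (hk : 0 < k)
    (S : V → Finset (Fin n)) (hcard : ∀ u, (S u).card = k) (w : V → ℝ) :
    0 ≤ ∑ u, ∑ v, ((n : ℝ) / (k : ℝ) ^ 2 * ((S u ∩ S v).card : ℝ) - 1) * (w u * w v) := by
  classical
  have hkR : (0:ℝ) < (k:ℝ) := by exact_mod_cast hk
  set y : Fin n → ℝ := fun α => ∑ u, (if α ∈ S u then w u else 0) with hy
  have hind : ∀ u v, ((S u ∩ S v).card : ℝ)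
      = ∑ α : Fin n, (if α ∈ S u then (1:ℝ) else 0) * (if α ∈ S v then (1:ℝ) else 0) := by
    intro u v
    have h1 : ∀ α : Fin n, (if α ∈ S u then (1:ℝ) else 0) * (if α ∈ S v then (1:ℝ) else 0)
        = if α ∈ S u ∩ S v then (1:ℝ) else 0 := by
      intro α; by_cases h1 : α ∈ S u <;> by_cases h2 : α ∈ S v <;> simp [h1, h2]
    rw [Finset.sum_congr rfl fun α _ => h1 α]
    rw [Finset.sum_ite_mem, Finset.univ_inter, Finset.sum_const, nsmul_eq_mul, mul_one]
  have hsum_t : ∑ u, ∑ v, ((S u ∩ S v).card : ℝ) * (w u * w v) = ∑ α, y α ^ 2 := by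
    have step : ∀ u v, ((S u ∩ S v).card : ℝ) * (w u * w v)
        = ∑ α : Fin n, (if α ∈ S u then w u else 0) * (if α ∈ S v then w v else 0) := by
      intro u v
      rw [hind u v, Finset.sum_mul]
      refine Finset.sum_congr rfl fun α _ => ?_
      by_cases h1 : α ∈ S u <;> by_cases h2 : α ∈ S v <;> simp [h1, h2]
    calc ∑ u, ∑ v, ((S u ∩ S v).card : ℝ) * (w u * w v)
        = ∑ u, ∑ v, ∑ α : Fin n, (if α ∈ S u then w u else 0) * (if α ∈ S v then w v else 0) :=
          Finset.sum_congr rfl fun u _ => Finset.sum_congr rfl fun v _ => step u v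
      _ = ∑ u, ∑ α : Fin n, ∑ v, (if α ∈ S u then w u else 0) * (if α ∈ S v then w v else 0) :=
          Finset.sum_congr rfl fun _ _ => Finset.sum_comm
      _ = ∑ α : Fin n, ∑ u, ∑ v, (if α ∈ S u then w u else 0) * (if α ∈ S v then w v else 0) :=
          Finset.sum_comm
      _ = ∑ α, y α ^ 2 := by
          refine Finset.sum_congr rfl fun α _ => ?_
          rw [← Finset.sum_mul_sum, sq]
  have hkey : (∑ u, w u) * (k:ℝ) = ∑ α, y α := by
    have h0 : ∑ α, y α = ∑ u, ∑ α : Fin n, (if α ∈ S u then w u else 0) := Finset.sum_comm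
    rw [h0, Finset.sum_mul]
    refine Finset.sum_congr rfl fun u _ => ?_
    rw [Finset.sum_ite_mem, Finset.univ_inter, Finset.sum_const, nsmul_eq_mul, hcard u]
    ring
  have hsum1 : ∑ u, ∑ v, (w u * w v) = (∑ u, w u) ^ 2 := by rw [sq, Finset.sum_mul_sum]
  have hCS : (∑ α, y α) ^ 2 ≤ (n:ℝ) * ∑ α, y α ^ 2 := by
    have h := sq_sum_le_card_mul_sum_sq (s := (Finset.univ : Finset (Fin n))) (f := y)
    simpa using h
  have hexp : ∑ u, ∑ v, ((n : ℝ) / (k : ℝ) ^ 2 * ((S u ∩ S v).card : ℝ) - 1) * (w u * w v)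
      = (n:ℝ)/(k:ℝ)^2 * (∑ α, y α ^ 2) - (∑ u, w u)^2 := by
    rw [← hsum_t, ← hsum1, Finset.mul_sum, ← Finset.sum_sub_distrib]
    refine Finset.sum_congr rfl fun u _ => ?_
    rw [Finset.mul_sum, ← Finset.sum_sub_distrib]
    exact Finset.sum_congr rfl fun v _ => by ring
  rw [hexp]
  have hw : (∑ u, w u) = (∑ α, y α) / (k:ℝ) := by
    field_simp
    linarith [hkey]
  rw [hw, div_pow, sub_nonneg]
  have hrw : (n:ℝ)/(k:ℝ)^2 * (∑ α, y α ^ 2) = ((n:ℝ) * ∑ α, y α ^ 2) / (k:ℝ)^2 := by ring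
  rw [hrw]
  exact (div_le_div_iff_of_pos_right (by positivity)).mpr hCS

private lemma core_ineq' {ι : Type*} [Fintype ι] (X Y a t : ι → ℝ) (n k sx sy : ℝ)
    (hk : 0 < k) (hn : 0 ≤ n)
    (hXX : ∑ p, X p * X p = sx)
    (hYY : ∑ p, Y p * Y p = sy)
    (htXY : ∑ p, t p * (X p * X p) = ∑ p, t p * (Y p * Y p))
    (ht : ∀ p, t p * (Y p * Y p) ≤ k * (Y p * Y p) - k * (a p * (Y p * Y p)))
    (haY : (∑ p, a p * Y p) ^ 2 = sy ^ 2)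
    (haa : ∑ p, a p * a p = sx + sy)
    (ha2 : ∀ p, a p * a p = a p)
    (hq : 0 ≤ ∑ p, (n / k ^ 2 * t p - 1) * (X p * X p))
    (hsx : 0 < sx) (hsy : 0 < sy) :
    sx + sy ≤ n / k * sy := by
  classical
  set σ : ℝ := ∑ p, a p * (Y p * Y p) with hσdef
  have e1 : ∑ p, (n / k ^ 2 * t p - 1) * (X p * X p)
      = n / k ^ 2 * (∑ p, t p * (X p * X p)) - sx := by
    rw [← hXX, Finset.mul_sum, ← Finset.sum_sub_distrib]
    exact Finset.sum_congr rfl fun p _ => by ring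
  have e2 : ∑ p, t p * (Y p * Y p) ≤ k * sy - k * σ := by
    calc ∑ p, t p * (Y p * Y p)
        ≤ ∑ p, (k * (Y p * Y p) - k * (a p * (Y p * Y p))) := Finset.sum_le_sum fun p _ => ht p
      _ = k * sy - k * σ := by
          rw [Finset.sum_sub_distrib, ← Finset.mul_sum, ← Finset.mul_sum, hYY]
  have e3 : sx ≤ n / k ^ 2 * (k * sy - k * σ) := by
    have h0 : sx ≤ n / k ^ 2 * (∑ p, t p * (X p * X p)) := by
      rw [e1] at hq; linarith
    rw [htXY] at h0
    exact h0.trans (mul_le_mul_of_nonneg_left e2 (by positivity))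
  have e3' : sx ≤ n / k * sy - n / k * σ := by
    have heq : n / k ^ 2 * (k * sy - k * σ) = n / k * sy - n / k * σ := by
      field_simp
    linarith [e3, heq.le, heq.ge]
  have hCS : sy ^ 2 ≤ (sx + sy) * σ := by
    have h1 := Finset.sum_mul_sq_le_sq_mul_sq Finset.univ a (fun p => a p * Y p)
    have h2 : ∑ p, a p * (a p * Y p) = ∑ p, a p * Y p :=
      Finset.sum_congr rfl fun p _ => by rw [← mul_assoc, ha2]
    have h3 : ∑ p, (a p) ^ 2 = sx + sy := by
      rw [← haa]; exact Finset.sum_congr rfl fun p _ => sq (a p)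
    have h4 : ∑ p, (a p * Y p) ^ 2 = σ := by
      rw [hσdef]
      refine Finset.sum_congr rfl fun p _ => ?_
      calc (a p * Y p) ^ 2 = (a p * a p) * (Y p * Y p) := by ring
        _ = a p * (Y p * Y p) := by rw [ha2]
    rw [h2, h3, h4] at h1
    rw [← haY]; exact h1
  have hm : 0 ≤ n / k := by positivity
  have t1 : sx * (sx + sy) ≤ (n / k * sy - n / k * σ) * (sx + sy) :=
    mul_le_mul_of_nonneg_right e3' (by positivity)
  have t2 : n / k * sy ^ 2 ≤ n / k * ((sx + sy) * σ) := mul_le_mul_of_nonneg_left hCS hm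
  have key : sx * (sx + sy) ≤ sx * (n / k * sy) := by nlinarith [t1, t2]
  exact le_of_mul_le_mul_left key hsx


private lemma hom_bound {V : Type*} [Fintype V] [DecidableEq V] (G : SimpleGraph V)
    [DecidableRel G.Adj] (hG : G.edgeSet.Nonempty) {n k : ℕ} (hk : 0 < k)
    (φ : G →g kneserGraph n k) :
    1 + max (sPos G / sNeg G) (sNeg G / sPos G) ≤ (n : ℝ) / (k : ℝ) := by
  classical
  obtain ⟨u₀, v₀, hadj⟩ : ∃ u v, G.Adj u v := by
    obtain ⟨e, he⟩ := hG
    induction e with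
    | _ u v => exact ⟨u, v, he⟩
  have hA := adjMatrix_isHermitian G
  set lam : V → ℝ := hA.eigenvalues with hlam
  set U : Matrix V V ℝ := (hA.eigenvectorUnitary : Matrix V V ℝ) with hUdef
  have hU1 : star U * U = 1 := Matrix.UnitaryGroup.star_mul_self hA.eigenvectorUnitary
  have horth : ∀ i j, (∑ u, U u i * U u j) = if i = j then (1:ℝ) else 0 := by
    intro i j
    have h := congrFun (congrFun hU1 i) j
    rw [Matrix.mul_apply, Matrix.one_apply] at h
    simpa [Matrix.star_apply] using h
  have hdecomp : ∀ u v, G.adjMatrix ℝ u v = ∑ i, lam i * (U u i * U v i) := by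
    intro u v
    conv_lhs => rw [hA.spectral_theorem, Unitary.conjStarAlgAut_apply]
    rw [Matrix.mul_apply]
    refine Finset.sum_congr rfl fun i _ => ?_
    rw [Matrix.mul_diagonal, Matrix.star_apply]
    simp only [Function.comp_apply, RCLike.ofReal_real_eq_id, id_eq, star_trivial]
    ring
  -- set system from the homomorphism
  set S : V → Finset (Fin n) := fun u => (φ u).1 with hS
  have hScard : ∀ u, (S u).card = k := fun u => (φ u).2
  have hdisj : ∀ {u v : V}, G.Adj u v → (S u ∩ S v).card = 0 := by
    intro u v h
    have h2 : φ u ≠ φ v ∧ Disjoint (φ u).1 (φ v).1 := φ.map_rel h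
    exact Finset.card_eq_zero.mpr (Finset.disjoint_iff_inter_eq_empty.mp h2.2)
  -- positive and negative spectral data
  set c : V → ℝ := fun i => max (lam i) 0 with hc
  set d : V → ℝ := fun i => max (-lam i) 0 with hd
  have hcd : ∀ i, c i - d i = lam i := by
    intro i
    rcases le_total (lam i) 0 with h | h
    · simp only [hc, hd, max_eq_right h, max_eq_left (neg_nonneg.mpr h)]; ring
    · simp only [hc, hd, max_eq_left h, max_eq_right (neg_nonpos.mpr h)]; ring
  have hcd0 : ∀ i, c i * d i = 0 := by
    intro i
    rcases le_total (lam i) 0 with h | h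
    · simp only [hc, hd, max_eq_right h]; ring
    · simp only [hc, hd, max_eq_right (neg_nonpos.mpr h)]; ring
  have hc0 : ∀ i, 0 ≤ c i := fun i => le_max_right _ _
  have hd0 : ∀ i, 0 ≤ d i := fun i => le_max_right _ _
  set P : V → V → ℝ := fun u v => ∑ i, c i * (U u i * U v i) with hP
  set N : V → V → ℝ := fun u v => ∑ i, d i * (U u i * U v i) with hN
  have hPN : ∀ u v, P u v - N u v = G.adjMatrix ℝ u v := by
    intro u v
    rw [hdecomp u v]
    simp only [hP, hN]
    rw [← Finset.sum_sub_distrib]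
    exact Finset.sum_congr rfl fun i _ => by rw [← hcd i]; ring
  set sp : ℝ := ∑ i, c i ^ 2 with hsp_def
  set sn : ℝ := ∑ i, d i ^ 2 with hsn_def
  have hsPos : sPos G = sp := by
    unfold sPos
    refine Finset.sum_congr rfl fun i _ => ?_
    by_cases h : 0 < lam i
    · rw [if_pos h]
      simp only [hc, max_eq_left h.le]
      rfl
    · rw [if_neg h]
      simp only [hc, max_eq_right (not_lt.mp h)]
      norm_num
  have hsNeg : sNeg G = sn := by
    unfold sNeg
    refine Finset.sum_congr rfl fun i _ => ?_
    by_cases h : lam i < 0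
    · rw [if_pos h]
      simp only [hd, max_eq_left (neg_nonneg.mpr h.le)]
      ring
    · rw [if_neg h]
      simp only [hd, max_eq_right (neg_nonpos.mpr (not_lt.mp h))]
      norm_num
  -- pairing facts
  have LP := pair_sum' U horth
  have hXXs : ∑ u, ∑ v, P u v * P u v = sp := by
    rw [LP c c]
    exact Finset.sum_congr rfl fun i _ => (sq (c i)).symm
  have hYYs : ∑ u, ∑ v, N u v * N u v = sn := by
    rw [LP d d]
    exact Finset.sum_congr rfl fun i _ => (sq (d i)).symm
  have haas : ∑ u, ∑ v, G.adjMatrix ℝ u v * G.adjMatrix ℝ u v = sp + sn := by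
    calc ∑ u, ∑ v, G.adjMatrix ℝ u v * G.adjMatrix ℝ u v
        = ∑ u, ∑ v, (∑ i, lam i * (U u i * U v i)) * (∑ j, lam j * (U u j * U v j)) := by
          refine Finset.sum_congr rfl fun u _ => Finset.sum_congr rfl fun v _ => ?_
          rw [hdecomp u v]
      _ = ∑ i, lam i * lam i := LP lam lam
      _ = ∑ i, (c i ^ 2 + d i ^ 2) := by
          refine Finset.sum_congr rfl fun i _ => ?_
          have h1 : lam i * lam i = c i ^ 2 - 2 * (c i * d i) + d i ^ 2 := by
            rw [← hcd i]; ring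
          rw [h1, hcd0 i]; ring
      _ = sp + sn := by rw [Finset.sum_add_distrib]
  have haNs : ∑ u, ∑ v, G.adjMatrix ℝ u v * N u v = -sn := by
    calc ∑ u, ∑ v, G.adjMatrix ℝ u v * N u v
        = ∑ u, ∑ v, (∑ i, lam i * (U u i * U v i)) * (∑ j, d j * (U u j * U v j)) := by
          refine Finset.sum_congr rfl fun u _ => Finset.sum_congr rfl fun v _ => ?_
          rw [hdecomp u v]
      _ = ∑ i, lam i * d i := LP lam d
      _ = ∑ i, -(d i ^ 2) := by
          refine Finset.sum_congr rfl fun i _ => ?_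
          have h1 : lam i * d i = c i * d i - d i ^ 2 := by
            rw [← hcd i]; ring
          rw [h1, hcd0 i]; ring
      _ = -sn := by rw [Finset.sum_neg_distrib]
  have haPs : ∑ u, ∑ v, G.adjMatrix ℝ u v * P u v = sp := by
    calc ∑ u, ∑ v, G.adjMatrix ℝ u v * P u v
        = ∑ u, ∑ v, (∑ i, lam i * (U u i * U v i)) * (∑ j, c j * (U u j * U v j)) := by
          refine Finset.sum_congr rfl fun u _ => Finset.sum_congr rfl fun v _ => ?_
          rw [hdecomp u v]
      _ = ∑ i, lam i * c i := LP lam c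
      _ = ∑ i, c i ^ 2 := by
          refine Finset.sum_congr rfl fun i _ => ?_
          have h1 : lam i * c i = c i ^ 2 - c i * d i := by
            rw [← hcd i]; ring
          rw [h1, hcd0 i]; ring
  -- equal entries off the support
  have hPNeq : ∀ u v, ((S u ∩ S v).card : ℝ) ≠ 0 → P u v = N u v := by
    intro u v h
    have hna : ¬ G.Adj u v := by
      intro hadj'
      exact h (by rw [hdisj hadj']; norm_num)
    have h0 : G.adjMatrix ℝ u v = 0 := by simp [hna]
    have := hPN u v
    rw [h0] at this
    linarith
  have htPN : ∑ u, ∑ v, ((S u ∩ S v).card : ℝ) * (P u v * P u v)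
      = ∑ u, ∑ v, ((S u ∩ S v).card : ℝ) * (N u v * N u v) := by
    refine Finset.sum_congr rfl fun u _ => Finset.sum_congr rfl fun v _ => ?_
    by_cases h : ((S u ∩ S v).card : ℝ) = 0
    · rw [h]; ring
    · rw [hPNeq u v h]
  have htk : ∀ (W : V → V → ℝ) (u v : V),
      ((S u ∩ S v).card : ℝ) * (W u v * W u v)
        ≤ (k:ℝ) * (W u v * W u v) - (k:ℝ) * (G.adjMatrix ℝ u v * (W u v * W u v)) := by
    intro W u v
    by_cases h : G.Adj u v
    · have h1 : G.adjMatrix ℝ u v = 1 := by simp [h]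
      rw [h1, hdisj h]
      norm_num
    · have h1 : G.adjMatrix ℝ u v = 0 := by simp [h]
      rw [h1]
      have hle : ((S u ∩ S v).card : ℝ) ≤ (k:ℝ) := by
        exact_mod_cast le_of_le_of_eq (Finset.card_le_card Finset.inter_subset_left) (hScard u)
      nlinarith [mul_self_nonneg (W u v)]
  have hq1 : 0 ≤ ∑ u, ∑ v,
      ((n:ℝ)/(k:ℝ)^2 * ((S u ∩ S v).card : ℝ) - 1) * (P u v * P u v) := by
    have hm := master_swap' U (fun u v => ((n:ℝ)/(k:ℝ)^2 * ((S u ∩ S v).card : ℝ) - 1)) c c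
    simp only [hP]
    rw [hm]
    refine Finset.sum_nonneg fun i _ => Finset.sum_nonneg fun j _ =>
      mul_nonneg (mul_nonneg (hc0 i) (hc0 j)) ?_
    exact qform_nonneg' hk S hScard (fun u => U u i * U u j)
  have hq2 : 0 ≤ ∑ u, ∑ v,
      ((n:ℝ)/(k:ℝ)^2 * ((S u ∩ S v).card : ℝ) - 1) * (N u v * N u v) := by
    have hm := master_swap' U (fun u v => ((n:ℝ)/(k:ℝ)^2 * ((S u ∩ S v).card : ℝ) - 1)) d d
    simp only [hN]
    rw [hm]
    refine Finset.sum_nonneg fun i _ => Finset.sum_nonneg fun j _ =>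
      mul_nonneg (mul_nonneg (hd0 i) (hd0 j)) ?_
    exact qform_nonneg' hk S hScard (fun u => U u i * U u j)
  -- positivity of sp and sn
  have htr : ∑ i, lam i = 0 := by
    have h1 : ∑ u, G.adjMatrix ℝ u u = 0 := Finset.sum_eq_zero fun u _ => by simp
    have h2 : ∑ u, G.adjMatrix ℝ u u = ∑ i, lam i := by
      calc ∑ u, G.adjMatrix ℝ u u = ∑ u, ∑ i, lam i * (U u i * U u i) :=
            Finset.sum_congr rfl fun u _ => hdecomp u u
        _ = ∑ i, ∑ u, lam i * (U u i * U u i) := Finset.sum_comm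
        _ = ∑ i, lam i := by
            refine Finset.sum_congr rfl fun i _ => ?_
            rw [← Finset.mul_sum, horth i i, if_pos rfl, mul_one]
    linarith
  have hone : (1:ℝ) ≤ sp + sn := by
    rw [← haas]
    have hterm : (1:ℝ) ≤ ∑ v, G.adjMatrix ℝ u₀ v * G.adjMatrix ℝ u₀ v := by
      have h1 : G.adjMatrix ℝ u₀ v₀ * G.adjMatrix ℝ u₀ v₀ = 1 := by simp [hadj]
      calc (1:ℝ) = G.adjMatrix ℝ u₀ v₀ * G.adjMatrix ℝ u₀ v₀ := h1.symm
        _ ≤ ∑ v, G.adjMatrix ℝ u₀ v * G.adjMatrix ℝ u₀ v := by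
            exact Finset.single_le_sum (f := fun v => G.adjMatrix ℝ u₀ v * G.adjMatrix ℝ u₀ v)
              (fun v _ => mul_self_nonneg _) (Finset.mem_univ v₀)
    calc (1:ℝ) ≤ ∑ v, G.adjMatrix ℝ u₀ v * G.adjMatrix ℝ u₀ v := hterm
      _ ≤ ∑ u, ∑ v, G.adjMatrix ℝ u v * G.adjMatrix ℝ u v := by
          exact Finset.single_le_sum (f := fun u => ∑ v, G.adjMatrix ℝ u v * G.adjMatrix ℝ u v)
            (fun u _ => Finset.sum_nonneg fun v _ => mul_self_nonneg _) (Finset.mem_univ u₀)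
  have hsp_pos : 0 < sp := by
    rcases lt_or_ge 0 sp with h | h
    · exact h
    · exfalso
      have hsp0 : sp = 0 :=
        le_antisymm h (Finset.sum_nonneg fun i _ => sq_nonneg _)
      have hcz : ∀ i ∈ Finset.univ, c i ^ 2 = 0 :=
        (Finset.sum_eq_zero_iff_of_nonneg (fun i _ => sq_nonneg (c i))).mp hsp0
      have hlam_le : ∀ i, lam i ≤ 0 := by
        intro i
        have h2 : c i = 0 := by
          have := hcz i (Finset.mem_univ i)
          exact (pow_eq_zero_iff (two_ne_zero)).mp this
        have h3 : lam i ≤ c i := le_max_left _ _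
        linarith
      have hlamz : ∀ i ∈ Finset.univ, lam i = 0 := by
        intro i _
        have h4 : ∀ j ∈ (Finset.univ : Finset V), -lam j ≥ 0 :=
          fun j _ => by linarith [hlam_le j]
        have h5 : ∑ j, -lam j = 0 := by rw [Finset.sum_neg_distrib, htr]; ring
        have := (Finset.sum_eq_zero_iff_of_nonneg h4).mp h5 i (Finset.mem_univ i)
        linarith
      have hdz : ∀ i, d i = 0 := by
        intro i
        simp only [hd, hlamz i (Finset.mem_univ i)]
        norm_num
      have hsn0 : sn = 0 := Finset.sum_eq_zero fun i _ => by rw [hdz i]; ring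
      rw [hsp0, hsn0] at hone
      linarith
  have hsn_pos : 0 < sn := by
    rcases lt_or_ge 0 sn with h | h
    · exact h
    · exfalso
      have hsn0 : sn = 0 :=
        le_antisymm h (Finset.sum_nonneg fun i _ => sq_nonneg _)
      have hdz' : ∀ i ∈ Finset.univ, d i ^ 2 = 0 :=
        (Finset.sum_eq_zero_iff_of_nonneg (fun i _ => sq_nonneg (d i))).mp hsn0
      have hlam_ge : ∀ i, 0 ≤ lam i := by
        intro i
        have h2 : d i = 0 := by
          have := hdz' i (Finset.mem_univ i)
          exact (pow_eq_zero_iff (two_ne_zero)).mp this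
        have h3 : -lam i ≤ d i := le_max_left _ _
        linarith
      have hlamz : ∀ i ∈ Finset.univ, lam i = 0 :=
        (Finset.sum_eq_zero_iff_of_nonneg (fun i _ => hlam_ge i)).mp htr
      have hcz : ∀ i, c i = 0 := by
        intro i
        simp only [hc, hlamz i (Finset.mem_univ i)]
        norm_num
      have hsp0 : sp = 0 := Finset.sum_eq_zero fun i _ => by rw [hcz i]; ring
      rw [hsp0, hsn0] at hone
      linarith
  -- apply the core inequality twice, over the index type V × V
  have hkR : (0:ℝ) < (k:ℝ) := by exact_mod_cast hk
  have hnR : (0:ℝ) ≤ (n:ℝ) := by positivity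
  have key1 : sp + sn ≤ (n:ℝ)/(k:ℝ) * sn := by
    apply core_ineq' (fun p : V × V => P p.1 p.2) (fun p => N p.1 p.2)
      (fun p => G.adjMatrix ℝ p.1 p.2) (fun p => ((S p.1 ∩ S p.2).card : ℝ))
      ((n:ℝ)) ((k:ℝ)) sp sn hkR hnR
    · rw [Fintype.sum_prod_type]; exact hXXs
    · rw [Fintype.sum_prod_type]; exact hYYs
    · rw [Fintype.sum_prod_type, Fintype.sum_prod_type]; exact htPN
    · exact fun p => htk N p.1 p.2
    · rw [Fintype.sum_prod_type, haNs]; ring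
    · rw [Fintype.sum_prod_type]; exact haas
    · intro p
      by_cases h : G.Adj p.1 p.2 <;> simp [h]
    · rw [Fintype.sum_prod_type]; exact hq1
    · exact hsp_pos
    · exact hsn_pos
  have key2 : sn + sp ≤ (n:ℝ)/(k:ℝ) * sp := by
    apply core_ineq' (fun p : V × V => N p.1 p.2) (fun p => P p.1 p.2)
      (fun p => G.adjMatrix ℝ p.1 p.2) (fun p => ((S p.1 ∩ S p.2).card : ℝ))
      ((n:ℝ)) ((k:ℝ)) sn sp hkR hnR
    · rw [Fintype.sum_prod_type]; exact hYYs
    · rw [Fintype.sum_prod_type]; exact hXXs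
    · rw [Fintype.sum_prod_type, Fintype.sum_prod_type]; exact htPN.symm
    · exact fun p => htk P p.1 p.2
    · rw [Fintype.sum_prod_type, haPs]
    · rw [Fintype.sum_prod_type, haas]; ring
    · intro p
      by_cases h : G.Adj p.1 p.2 <;> simp [h]
    · rw [Fintype.sum_prod_type]; exact hq2
    · exact hsn_pos
    · exact hsp_pos
  -- conclude
  rw [hsPos, hsNeg]
  have hfin1 : 1 + sp / sn ≤ (n:ℝ)/(k:ℝ) := by
    have h2 : (1 + sp / sn) * sn = sp + sn := by field_simp; ring
    have h3 : (1 + sp / sn) * sn ≤ ((n:ℝ)/(k:ℝ)) * sn := by rw [h2]; exact key1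
    exact le_of_mul_le_mul_right h3 hsn_pos
  have hfin2 : 1 + sn / sp ≤ (n:ℝ)/(k:ℝ) := by
    have h2 : (1 + sn / sp) * sp = sn + sp := by field_simp; ring
    have h3 : (1 + sn / sp) * sp ≤ ((n:ℝ)/(k:ℝ)) * sp := by rw [h2]; exact key2
    exact le_of_mul_le_mul_right h3 hsp_pos
  have := max_le (by linarith : sp / sn ≤ (n:ℝ)/(k:ℝ) - 1)
    (by linarith : sn / sp ≤ (n:ℝ)/(k:ℝ) - 1)
  linarith


private lemma frac_set_nonempty {V : Type*} [Fintype V] [DecidableEq V] (G : SimpleGraph V) :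
    ∃ q : ℝ, ∃ n k : ℕ, 0 < k ∧ Nonempty (G →g kneserGraph n k) ∧ q = (n : ℝ) / k := by
  classical
  refine ⟨(Fintype.card V : ℝ) / 1, Fintype.card V, 1, Nat.one_pos, ⟨?_⟩, by norm_num⟩
  exact
    { toFun := fun u => ⟨{Fintype.equivFin V u}, Finset.card_singleton _⟩
      map_rel' := by
        intro u v h
        show _ ≠ _ ∧ Disjoint _ _
        constructor
        · intro hEq
          apply G.ne_of_adj h
          have h1 : ({Fintype.equivFin V u} : Finset (Fin (Fintype.card V)))
              = {Fintype.equivFin V v} := congrArg Subtype.val hEq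
          exact (Fintype.equivFin V).injective (Finset.singleton_injective h1)
        · rw [Finset.disjoint_singleton]
          exact (Fintype.equivFin V).injective.ne (G.ne_of_adj h) }


end SpectralFrac

/-- **Theorem (main).** For any finite simple graph `G` with at least one edge, the fractional
chromatic number satisfies `χ_f(G) ≥ 1 + max { s⁺(G)/s⁻(G), s⁻(G)/s⁺(G) }`. -/
theorem SpectralFrac.fracChromaticNumber_ge_one_add_max {V : Type*} [Fintype V] [DecidableEq V]
    (G : SimpleGraph V) [DecidableRel G.Adj] (hG : G.edgeSet.Nonempty) :
    1 + max (sPos G / sNeg G) (sNeg G / sPos G) ≤ fracChromaticNumber G := by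
  classical
  unfold fracChromaticNumber
  apply le_csInf
  · obtain ⟨q, n, k, hk, hne, hq⟩ := frac_set_nonempty G
    exact ⟨q, n, k, hk, hne, hq⟩
  · rintro b ⟨n, k, hk, ⟨φ⟩, rfl⟩
    exact hom_bound G hG hk φ
end

section
/- If G is a finite simple graph with at least one edge and there exists a graph homomorphism from G to an edge-transitive finite simple graph H, then λ_max(H)/|λ_min(H)| ≥ max{ s⁺(G)/s⁻(G), s⁻(G)/s⁺(G) }, where λ_max(H) and λ_min(H) denote the largest and smallest eigenvalues of the adjacency matrix of H. -/
open Matrix Finset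

namespace SpectralFrac

section AuxSpectral

variable {n : Type*} [Fintype n] [DecidableEq n] {A : Matrix n n ℝ}

variable {n : Type*} [Fintype n] [DecidableEq n] {A : Matrix n n ℝ}

/-- sandwich of a diagonal by the eigenvector unitary -/
noncomputable def sand (hA : A.IsHermitian) (d : n → ℝ) : Matrix n n ℝ :=
  (hA.eigenvectorUnitary : Matrix n n ℝ) * diagonal d *
    star (hA.eigenvectorUnitary : Matrix n n ℝ)

lemma star_mul_self_eigen (hA : A.IsHermitian) :
    star (hA.eigenvectorUnitary : Matrix n n ℝ) * (hA.eigenvectorUnitary : Matrix n n ℝ) = 1 :=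
  Unitary.star_mul_self_of_mem hA.eigenvectorUnitary.prop

lemma mul_star_self_eigen (hA : A.IsHermitian) :
    (hA.eigenvectorUnitary : Matrix n n ℝ) * star (hA.eigenvectorUnitary : Matrix n n ℝ) = 1 :=
  Unitary.mul_star_self_of_mem hA.eigenvectorUnitary.prop

lemma star_eigen_eq_transpose (hA : A.IsHermitian) :
    star (hA.eigenvectorUnitary : Matrix n n ℝ) = (hA.eigenvectorUnitary : Matrix n n ℝ)ᵀ := by
  rw [star_eq_conjTranspose, conjTranspose_eq_transpose_of_trivial]

lemma sand_mul (hA : A.IsHermitian) (d₁ d₂ : n → ℝ) :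
    sand hA d₁ * sand hA d₂ = sand hA (d₁ * d₂) := by
  unfold sand
  rw [show ∀ (X Y Z W : Matrix n n ℝ),
      (X * Y * star X) * (X * Z * W) = X * (Y * (star X * X) * Z) * W from
    fun X Y Z W => by noncomm_ring, star_mul_self_eigen hA, Matrix.mul_one,
    diagonal_mul_diagonal]
  rfl

lemma sand_sub (hA : A.IsHermitian) (d₁ d₂ : n → ℝ) :
    sand hA d₁ - sand hA d₂ = sand hA (d₁ - d₂) := by
  unfold sand
  rw [show diagonal (d₁ - d₂) = diagonal d₁ - diagonal d₂ by
      funext i j; by_cases h : i = j <;> simp [diagonal, h],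
    Matrix.mul_sub, Matrix.sub_mul]

lemma sand_eq_self (hA : A.IsHermitian) : sand hA hA.eigenvalues = A := by
  conv_rhs => rw [hA.spectral_theorem]
  unfold sand
  norm_num

lemma sand_transpose (hA : A.IsHermitian) (d : n → ℝ) : (sand hA d)ᵀ = sand hA d := by
  unfold sand
  rw [star_eigen_eq_transpose hA, transpose_mul, transpose_mul, transpose_transpose,
    diagonal_transpose, Matrix.mul_assoc]

lemma sand_trace (hA : A.IsHermitian) (d : n → ℝ) : (sand hA d).trace = ∑ i, d i := by
  unfold sand
  rw [Matrix.trace_mul_cycle, star_mul_self_eigen hA, Matrix.one_mul, Matrix.trace_diagonal]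

lemma sand_posSemidef (hA : A.IsHermitian) (d : n → ℝ) (hd : ∀ i, 0 ≤ d i) :
    (sand hA d).PosSemidef := by
  have key : (star (hA.eigenvectorUnitary : Matrix n n ℝ))ᴴ
      = (hA.eigenvectorUnitary : Matrix n n ℝ) := by
    rw [star_eq_conjTranspose, conjTranspose_conjTranspose]
  have h : ((diagonal (fun i => Real.sqrt (d i)) * star (hA.eigenvectorUnitary : Matrix n n ℝ))ᴴ) *
      (diagonal (fun i => Real.sqrt (d i)) * star (hA.eigenvectorUnitary : Matrix n n ℝ))
      = sand hA d := by
    rw [conjTranspose_mul, key, conjTranspose_eq_transpose_of_trivial (diagonal _),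
      diagonal_transpose]
    unfold sand
    rw [show ∀ (X Y Z W : Matrix n n ℝ), X * Y * (Z * W) = X * (Y * Z) * W from
      fun X Y Z W => by noncomm_ring, diagonal_mul_diagonal,
      show (fun i => Real.sqrt (d i) * Real.sqrt (d i)) = d from
        funext fun i => Real.mul_self_sqrt (hd i)]
  rw [← h]
  exact posSemidef_conjTranspose_mul_self _

/-- entrywise double-sum of a product of two sandwiches -/
lemma sand_entry_sum (hA : A.IsHermitian) (d₁ d₂ : n → ℝ) :
    ∑ u, ∑ v, sand hA d₁ u v * sand hA d₂ u v = ∑ i, d₁ i * d₂ i := by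
  have h1 : ∑ u, ∑ v, sand hA d₁ u v * sand hA d₂ u v
      = (sand hA d₁ * (sand hA d₂)ᵀ).trace := by
    rw [Matrix.trace]
    simp only [Matrix.diag, Matrix.mul_apply, Matrix.transpose_apply]
  rw [h1, sand_transpose hA, sand_mul hA, sand_trace hA]
  rfl

lemma sand_apply (hA : A.IsHermitian) (d : n → ℝ) (x y : n) :
    sand hA d x y = ∑ i, d i * ((hA.eigenvectorUnitary : Matrix n n ℝ) x i *
      (hA.eigenvectorUnitary : Matrix n n ℝ) y i) := by
  unfold sand
  rw [Matrix.mul_apply]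
  refine Finset.sum_congr rfl fun i _ => ?_
  rw [Matrix.mul_diagonal, Matrix.star_apply, star_trivial]
  ring

lemma unit_rows (hA : A.IsHermitian) (x y : n) :
    ∑ i, (hA.eigenvectorUnitary : Matrix n n ℝ) x i *
      (hA.eigenvectorUnitary : Matrix n n ℝ) y i = if x = y then 1 else 0 := by
  have h := congrFun (congrFun (mul_star_self_eigen hA) x) y
  rw [Matrix.mul_apply] at h
  simp only [Matrix.star_apply, star_trivial] at h
  rw [h, Matrix.one_apply]

/-- quadratic form of a sandwich -/
lemma sand_quadform (hA : A.IsHermitian) (d : n → ℝ) (u : n → ℝ) :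
    ∑ x, ∑ y, sand hA d x y * (u x * u y)
      = ∑ i, d i * (∑ x, u x * (hA.eigenvectorUnitary : Matrix n n ℝ) x i)^2 := by
  set U : Matrix n n ℝ := (hA.eigenvectorUnitary : Matrix n n ℝ) with hU
  have hterm : ∀ x y : n, sand hA d x y * (u x * u y)
      = ∑ i, d i * ((u x * U x i) * (u y * U y i)) := by
    intro x y
    rw [sand_apply, Finset.sum_mul]
    exact Finset.sum_congr rfl fun i _ => by ring
  calc ∑ x, ∑ y, sand hA d x y * (u x * u y)
      = ∑ x, ∑ y, ∑ i, d i * ((u x * U x i) * (u y * U y i)) :=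
        Finset.sum_congr rfl fun x _ => Finset.sum_congr rfl fun y _ => hterm x y
    _ = ∑ x, ∑ i, (d i * (u x * U x i)) * (∑ y, u y * U y i) := by
        refine Finset.sum_congr rfl fun x _ => ?_
        rw [Finset.sum_comm]
        refine Finset.sum_congr rfl fun i _ => ?_
        rw [Finset.mul_sum]
        exact Finset.sum_congr rfl fun y _ => by ring
    _ = ∑ i, ∑ x, (d i * (u x * U x i)) * (∑ y, u y * U y i) := Finset.sum_comm
    _ = ∑ i, d i * (∑ x, u x * U x i)^2 := by
        refine Finset.sum_congr rfl fun i _ => ?_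
        rw [sq, ← Finset.sum_mul, ← Finset.mul_sum]
        ring

lemma coeff_norm (hA : A.IsHermitian) (u : n → ℝ) :
    ∑ i, (∑ x, u x * (hA.eigenvectorUnitary : Matrix n n ℝ) x i)^2 = ∑ z, (u z)^2 := by
  set U : Matrix n n ℝ := (hA.eigenvectorUnitary : Matrix n n ℝ) with hU
  calc ∑ i, (∑ x, u x * U x i)^2
      = ∑ i, ∑ x, ∑ y, (u x * U x i) * (u y * U y i) := by
        refine Finset.sum_congr rfl fun i _ => ?_
        rw [sq, Finset.sum_mul_sum]
    _ = ∑ x, ∑ i, ∑ y, (u x * U x i) * (u y * U y i) := Finset.sum_comm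
    _ = ∑ x, ∑ y, ∑ i, (u x * U x i) * (u y * U y i) :=
        Finset.sum_congr rfl fun x _ => Finset.sum_comm
    _ = ∑ x, ∑ y, (u x * u y) * ∑ i, U x i * U y i := by
        refine Finset.sum_congr rfl fun x _ => Finset.sum_congr rfl fun y _ => ?_
        rw [Finset.mul_sum]
        exact Finset.sum_congr rfl fun i _ => by ring
    _ = ∑ z, (u z)^2 := by
        refine Finset.sum_congr rfl fun x _ => ?_
        rw [show (∑ y, (u x * u y) * ∑ i, U x i * U y i)
            = ∑ y, (u x * u y) * (if x = y then (1:ℝ) else 0) from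
          Finset.sum_congr rfl fun y _ => by rw [unit_rows hA]]
        rw [Finset.sum_eq_single x]
        · rw [if_pos rfl, sq]; ring
        · intro y _ hyx
          rw [if_neg (fun h => hyx h.symm), mul_zero]
        · intro h
          exact absurd (Finset.mem_univ x) h
open scoped MatrixOrder in
lemma posSemidef_iff_eq_transpose_mul_self {M : Matrix n n ℝ} :
    M.PosSemidef ↔ ∃ B : Matrix n n ℝ, M = Bᴴ * B := by
  refine ⟨fun h => ?_, fun ⟨B, hB⟩ => hB ▸ posSemidef_conjTranspose_mul_self B⟩
  obtain ⟨B, hB⟩ := CStarAlgebra.nonneg_iff_eq_star_mul_self.mp h.nonneg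
  exact ⟨B, hB⟩
lemma psd_entry_eq {P : Matrix n n ℝ} {C : Matrix n n ℝ} (hC : P = Cᴴ * C) (u v : n) :
    P u v = ∑ i, C i u * C i v := by
  rw [hC]; simp [Matrix.mul_apply, Matrix.conjTranspose_apply]

lemma entry_sq_quadform_nonneg {P : Matrix n n ℝ} (hP : P.PosSemidef) (x : n → ℝ) :
    0 ≤ ∑ u, ∑ v, (P u v)^2 * (x u * x v) := by
  obtain ⟨C, hC⟩ := posSemidef_iff_eq_transpose_mul_self.mp hP
  have hterm : ∀ u v : n, (P u v)^2 * (x u * x v)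
      = ∑ q : n × n, (C q.1 u * C q.2 u * x u) * (C q.1 v * C q.2 v * x v) := by
    intro u v
    rw [psd_entry_eq hC, Fintype.sum_prod_type, sq, Finset.sum_mul_sum]
    simp only [Finset.sum_mul, Finset.mul_sum]
    exact Finset.sum_congr rfl fun i _ => Finset.sum_congr rfl fun j _ => by ring
  calc ∑ u, ∑ v, (P u v)^2 * (x u * x v)
      = ∑ u, ∑ v, ∑ q : n × n, (C q.1 u * C q.2 u * x u) * (C q.1 v * C q.2 v * x v) :=
        Finset.sum_congr rfl fun u _ => Finset.sum_congr rfl fun v _ => hterm u v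
    _ = ∑ u, ∑ q : n × n, (C q.1 u * C q.2 u * x u) * (∑ v, C q.1 v * C q.2 v * x v) := by
        refine Finset.sum_congr rfl fun u _ => ?_
        rw [Finset.sum_comm]
        exact Finset.sum_congr rfl fun q _ => (Finset.mul_sum _ _ _).symm
    _ = ∑ q : n × n, (∑ u, C q.1 u * C q.2 u * x u) * (∑ v, C q.1 v * C q.2 v * x v) := by
        rw [Finset.sum_comm]
        exact Finset.sum_congr rfl fun q _ => (Finset.sum_mul _ _ _).symm
    _ ≥ 0 := Finset.sum_nonneg fun q _ => mul_self_nonneg _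

lemma schur_trace_nonneg {P M : Matrix n n ℝ} (hP : P.PosSemidef) (hM : M.PosSemidef) :
    0 ≤ ∑ u, ∑ v, (P u v)^2 * M u v := by
  obtain ⟨D, hD⟩ := posSemidef_iff_eq_transpose_mul_self.mp hM
  calc (0:ℝ) ≤ ∑ k, ∑ u, ∑ v, (P u v)^2 * (D k u * D k v) :=
        Finset.sum_nonneg fun k _ => entry_sq_quadform_nonneg hP _
    _ = ∑ u, ∑ k, ∑ v, (P u v)^2 * (D k u * D k v) := Finset.sum_comm
    _ = ∑ u, ∑ v, ∑ k, (P u v)^2 * (D k u * D k v) :=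
        Finset.sum_congr rfl fun u _ => Finset.sum_comm
    _ = ∑ u, ∑ v, (P u v)^2 * M u v := by
        refine Finset.sum_congr rfl fun u _ => Finset.sum_congr rfl fun v _ => ?_
        rw [psd_entry_eq hD, Finset.mul_sum]

lemma psd_entry_sq_le {M : Matrix n n ℝ} (hM : M.PosSemidef) (u v : n) :
    (M u v)^2 ≤ M u u * M v v := by
  obtain ⟨C, hC⟩ := posSemidef_iff_eq_transpose_mul_self.mp hM
  rw [psd_entry_eq hC, psd_entry_eq hC, psd_entry_eq hC]
  have := Finset.sum_mul_sq_le_sq_mul_sq Finset.univ (fun i => C i u) (fun i => C i v)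
  calc (∑ i, C i u * C i v)^2 ≤ (∑ i, (C i u)^2) * (∑ i, (C i v)^2) := this
    _ = (∑ i, C i u * C i u) * (∑ i, C i v * C i v) := by simp [sq]

lemma psd_diag_nonneg {M : Matrix n n ℝ} (hM : M.PosSemidef) (u : n) : 0 ≤ M u u := by
  obtain ⟨C, hC⟩ := posSemidef_iff_eq_transpose_mul_self.mp hM
  rw [psd_entry_eq hC]
  exact Finset.sum_nonneg fun i _ => mul_self_nonneg _

lemma main_twosided {P N M : Matrix n n ℝ} {t : ℝ} (ht : 0 ≤ t)
    (hP : P.PosSemidef) (hN : N.PosSemidef) (hM : M.PosSemidef)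
    (hdiag : ∀ u, M u u ≤ 1)
    (hsupp : ∀ u v, M u v ≠ -t → P u v = N u v)
    (horth : ∑ u, ∑ v, P u v * N u v = 0) :
    t * (∑ u, ∑ v, (P u v)^2) ≤ ∑ u, ∑ v, (N u v)^2 := by
  classical
  -- move to sums over pairs
  set S : Finset (n × n) := Finset.univ.filter (fun p => M p.1 p.2 = -t) with hS
  set Sc : Finset (n × n) := Finset.univ.filter (fun p => ¬ (M p.1 p.2 = -t)) with hSc
  have hsplit : ∀ f : n × n → ℝ, (∑ p ∈ S, f p) + (∑ p ∈ Sc, f p) = ∑ p : n × n, f p := by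
    intro f; exact Finset.sum_filter_add_sum_filter_not _ _ _
  have hpair : ∀ f : n → n → ℝ, (∑ u, ∑ v, f u v) = ∑ p : n × n, f p.1 p.2 := by
    intro f; rw [Fintype.sum_prod_type]
  set p2 : ℝ := ∑ p ∈ S, (P p.1 p.2)^2 with hp2def
  set n2 : ℝ := ∑ p ∈ S, (N p.1 p.2)^2 with hn2def
  set r : ℝ := ∑ p ∈ Sc, (P p.1 p.2)^2 with hrdef
  have hPNc : ∀ p ∈ Sc, P p.1 p.2 = N p.1 p.2 := by
    intro p hp
    exact hsupp p.1 p.2 (by simpa [hSc] using hp)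
  have hp2 : (0:ℝ) ≤ p2 := Finset.sum_nonneg fun p _ => sq_nonneg _
  have hn2 : (0:ℝ) ≤ n2 := Finset.sum_nonneg fun p _ => sq_nonneg _
  have hr : (0:ℝ) ≤ r := Finset.sum_nonneg fun p _ => sq_nonneg _
  -- orthogonality gives the S-inner product
  have hx : ∑ p ∈ S, P p.1 p.2 * N p.1 p.2 = -r := by
    have h0 : (∑ p ∈ S, P p.1 p.2 * N p.1 p.2) + (∑ p ∈ Sc, P p.1 p.2 * N p.1 p.2) = 0 := by
      rw [hsplit (fun p => P p.1 p.2 * N p.1 p.2), ← hpair (fun u v => P u v * N u v), horth]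
    have h1 : ∑ p ∈ Sc, P p.1 p.2 * N p.1 p.2 = r := by
      rw [hrdef]
      refine Finset.sum_congr rfl fun p hp => ?_
      rw [← hPNc p hp, sq]
    linarith
  -- Cauchy-Schwarz on S
  have hr2 : r^2 ≤ p2 * n2 := by
    have := Finset.sum_mul_sq_le_sq_mul_sq S (fun p => P p.1 p.2) (fun p => N p.1 p.2)
    rw [hx] at this
    simpa [hp2def, hn2def] using this
  -- cone inequality
  have hcone : t * p2 ≤ r := by
    have h0 : (0:ℝ) ≤ ∑ p : n × n, (P p.1 p.2)^2 * M p.1 p.2 := by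
      rw [← hpair (fun u v => (P u v)^2 * M u v)]
      exact schur_trace_nonneg hP hM
    have hSval : ∑ p ∈ S, (P p.1 p.2)^2 * M p.1 p.2 = -t * p2 := by
      rw [hp2def, Finset.mul_sum]
      refine Finset.sum_congr rfl fun p hp => ?_
      have : M p.1 p.2 = -t := by simpa [hS] using hp
      rw [this]; ring
    have hScle : ∑ p ∈ Sc, (P p.1 p.2)^2 * M p.1 p.2 ≤ r := by
      rw [hrdef]
      refine Finset.sum_le_sum fun p _ => ?_
      have hm1 : (M p.1 p.2)^2 ≤ 1 := by
        calc (M p.1 p.2)^2 ≤ M p.1 p.1 * M p.2 p.2 := psd_entry_sq_le hM _ _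
          _ ≤ 1 := mul_le_one₀ (hdiag _) (psd_diag_nonneg hM _) (hdiag _)
      have : M p.1 p.2 ≤ 1 := by nlinarith
      nlinarith [sq_nonneg (P p.1 p.2)]
    have := hsplit (fun p => (P p.1 p.2)^2 * M p.1 p.2)
    nlinarith
  -- conclude
  have hgoal : t * (p2 + r) ≤ n2 + r := by
    rcases eq_or_lt_of_le hp2 with h0 | hp2pos
    · have hr0 : r = 0 := by nlinarith
      rw [← h0, hr0]; simpa using hn2
    · nlinarith [mul_nonneg (add_nonneg hr hp2) (sub_nonneg.mpr hcone)]
  have hPsum : ∑ u, ∑ v, (P u v)^2 = p2 + r := by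
    rw [hpair (fun u v => (P u v)^2), ← hsplit (fun p => (P p.1 p.2)^2)]
  have hNsum : ∑ u, ∑ v, (N u v)^2 = n2 + r := by
    rw [hpair (fun u v => (N u v)^2), ← hsplit (fun p => (N p.1 p.2)^2)]
    congr 1
    refine Finset.sum_congr rfl fun p hp => ?_
    rw [← hPNc p hp]
  rw [hPsum, hNsum]
  exact hgoal
end AuxSpectral

section Graphs

lemma exists_PN {V : Type*} [Fintype V] [DecidableEq V] (G : SimpleGraph V) [DecidableRel G.Adj] :
    ∃ P N : Matrix V V ℝ, P.PosSemidef ∧ N.PosSemidef ∧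
      (∀ u v, ¬ G.Adj u v → P u v = N u v) ∧
      (∑ u, ∑ v, P u v * N u v = 0) ∧
      (∑ u, ∑ v, (P u v)^2 = sPos G) ∧ (∑ u, ∑ v, (N u v)^2 = sNeg G) ∧
      (∀ a b, G.Adj a b → P a b - N a b = 1) := by
  classical
  set hA := adjMatrix_isHermitian G with hhA
  set ev := hA.eigenvalues with hev
  set P := sand hA (fun i => max (ev i) 0) with hP
  set N := sand hA (fun i => max (-ev i) 0) with hN
  have hsub : P - N = G.adjMatrix ℝ := by
    rw [hP, hN, sand_sub]
    have : (fun i => max (ev i) 0) - (fun i => max (-ev i) 0) = ev := by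
      funext i
      simp only [Pi.sub_apply]
      rcases le_total (ev i) 0 with h | h
      · rw [max_eq_right h, max_eq_left (by linarith)]; ring
      · rw [max_eq_left h, max_eq_right (by linarith)]; ring
    rw [this, hev, hhA, sand_eq_self]
  refine ⟨P, N, sand_posSemidef _ _ (fun i => le_max_right _ _),
    sand_posSemidef _ _ (fun i => le_max_right _ _), ?_, ?_, ?_, ?_, ?_⟩
  · intro u v huv
    have h0 : (G.adjMatrix ℝ) u v = 0 := by simp [SimpleGraph.adjMatrix, huv]
    have := congrFun (congrFun hsub u) v
    simp only [Matrix.sub_apply] at this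
    linarith [this.trans h0]
  · rw [hP, hN, sand_entry_sum]
    apply Finset.sum_eq_zero
    intro i _
    rcases le_total (ev i) 0 with h | h
    · rw [max_eq_right h]; ring
    · rw [max_eq_right (by linarith : -ev i ≤ 0)]; ring
  · rw [hP]
    simp only [pow_two]
    rw [sand_entry_sum, sPos]
    refine Finset.sum_congr rfl fun i _ => ?_
    rcases lt_trichotomy (ev i) 0 with h | h | h
    · rw [if_neg (by linarith), max_eq_right h.le]; ring
    · rw [if_neg (by linarith), h]; norm_num
    · rw [if_pos (by linarith), max_eq_left h.le]; ring
  · rw [hN]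
    simp only [pow_two]
    rw [sand_entry_sum, sNeg]
    refine Finset.sum_congr rfl fun i _ => ?_
    rcases lt_trichotomy (ev i) 0 with h | h | h
    · rw [if_pos (by linarith), max_eq_left (by linarith)]; ring
    · rw [if_neg (by linarith), h]; norm_num
    · rw [if_neg (by linarith), max_eq_right (by linarith)]; ring
  · intro a b hab
    have := congrFun (congrFun hsub a) b
    simp only [Matrix.sub_apply] at this
    rw [this]
    simp [SimpleGraph.adjMatrix, hab]

/-- The key H-side construction. -/
lemma exists_good_matrix {W : Type*} [Fintype W] [DecidableEq W] (H : SimpleGraph W) [DecidableRel H.Adj]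
    (hH : IsEdgeTransitive H) {x₀ y₀ : W} (hxy : H.Adj x₀ y₀) :
    ∃ (M : Matrix W W ℝ) (t : ℝ), M.PosSemidef ∧ (∀ z, M z z ≤ 1) ∧
      (∀ x y, H.Adj x y → M x y = -t) ∧ 0 < t ∧
      -(lamMin H) ≤ t * lamMax H ∧ 0 < -(lamMin H) := by
  classical
  haveI : Nonempty W := ⟨x₀⟩
  have hB : (H.adjMatrix ℝ).IsHermitian := adjMatrix_isHermitian H
  set ev : W → ℝ := hB.eigenvalues with hev
  have hbddA : BddAbove (Set.range ev) := Set.Finite.bddAbove (Set.finite_range ev)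
  have hbddB : BddBelow (Set.range ev) := Set.Finite.bddBelow (Set.finite_range ev)
  have hevleΛ : ∀ i, ev i ≤ lamMax H := fun i => le_ciSup hbddA i
  have hlminle : ∀ i, lamMin H ≤ ev i := fun i => ciInf_le hbddB i
  have hsandB : sand hB ev = H.adjMatrix ℝ := sand_eq_self hB
  -- trace is zero
  have htrace : ∑ i, ev i = 0 := by
    have h1 : (sand hB ev).trace = ∑ i, ev i := sand_trace hB ev
    rw [hsandB] at h1
    rw [← h1]
    simp [Matrix.trace, Matrix.diag]
  have hBx₀y₀ : H.adjMatrix ℝ x₀ y₀ = 1 := by simp [SimpleGraph.adjMatrix, hxy]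
  have hnotzero : ¬ (∀ i, ev i = 0) := by
    intro hz
    have h0 : H.adjMatrix ℝ = 0 := by
      rw [← hsandB, show ev = fun _ => (0:ℝ) from funext hz]
      unfold sand
      simp
    rw [h0] at hBx₀y₀
    simp at hBx₀y₀
  have hlminneg : lamMin H < 0 := by
    by_contra h
    push_neg at h
    refine hnotzero fun i => ?_
    have h1 : ∀ j, 0 ≤ ev j := fun j => le_trans h (hlminle j)
    exact (Finset.sum_eq_zero_iff_of_nonneg (fun j _ => h1 j)).mp htrace i (Finset.mem_univ i)
  have hΛpos : 0 < lamMax H := by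
    by_contra h
    push_neg at h
    refine hnotzero fun i => ?_
    have h1 : ∀ j, ev j ≤ 0 := fun j => le_trans (hevleΛ j) h
    exact (Finset.sum_eq_zero_iff_of_nonpos (fun j _ => h1 j)).mp htrace i (Finset.mem_univ i)
  obtain ⟨i₀, hi₀min⟩ := Finite.exists_min ev
  have hi₀ : ev i₀ = lamMin H := le_antisymm (le_ciInf hi₀min) (hlminle i₀)
  -- the indicator of the minimal eigenspace
  set ind : W → ℝ := fun i => if ev i = lamMin H then 1 else 0 with hind
  have hindnn : ∀ i, 0 ≤ ind i := by
    intro i; rw [hind]; dsimp only; split <;> norm_num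
  set E : Matrix W W ℝ := sand hB ind with hE
  have hEpsd : E.PosSemidef := sand_posSemidef hB ind hindnn
  set g : ℝ := ∑ i, ind i with hg
  have hgpos : 0 < g := by
    rw [hg]
    have h1 : (1:ℝ) ≤ ∑ i, ind i := by
      have : ind i₀ = 1 := by rw [hind]; dsimp only; rw [if_pos hi₀]
      calc (1:ℝ) = ind i₀ := this.symm
        _ ≤ ∑ i, ind i := Finset.single_le_sum (fun j _ => hindnn j) (Finset.mem_univ i₀)
    linarith
  have htrE : ∑ z, E z z = g := by
    have := sand_trace hB ind
    rw [← hE] at this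
    simpa [Matrix.trace, Matrix.diag] using this
  have hBE : ∑ x, ∑ y, H.adjMatrix ℝ x y * E x y = lamMin H * g := by
    have h1 := sand_entry_sum hB ev ind
    rw [hsandB, ← hE] at h1
    rw [h1, hg, Finset.mul_sum]
    refine Finset.sum_congr rfl fun i _ => ?_
    rw [hind]; dsimp only
    split
    · rename_i hcase; rw [hcase]
    · ring
  -- the automorphism group
  have honemem : (1 : Equiv.Perm W) ∈ autSet H := by
    rw [autSet, Finset.mem_filter]
    exact ⟨Finset.mem_univ _, fun u v => by simp⟩
  have hmulmem : ∀ {π σ : Equiv.Perm W}, π ∈ autSet H → σ ∈ autSet H → π * σ ∈ autSet H := by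
    intro π σ hπ hσ
    rw [autSet, Finset.mem_filter] at *
    refine ⟨Finset.mem_univ _, fun u v => ?_⟩
    rw [Equiv.Perm.mul_apply, Equiv.Perm.mul_apply]
    exact (hπ.2 (σ u) (σ v)).trans (hσ.2 u v)
  have hinvmem : ∀ {π : Equiv.Perm W}, π ∈ autSet H → π⁻¹ ∈ autSet H := by
    intro π hπ
    rw [autSet, Finset.mem_filter] at *
    refine ⟨Finset.mem_univ _, fun u v => ?_⟩
    have := (hπ.2 (π⁻¹ u) (π⁻¹ v)).symm
    simpa using this
  have hadjiff : ∀ {π : Equiv.Perm W}, π ∈ autSet H → ∀ u v, (H.Adj (π u) (π v) ↔ H.Adj u v) := by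
    intro π hπ
    rw [autSet, Finset.mem_filter] at hπ
    exact hπ.2
  have hΓcard : 0 < ((autSet H).card : ℝ) := by
    have : 0 < (autSet H).card := Finset.card_pos.mpr ⟨1, honemem⟩
    exact_mod_cast this
  -- the averaged matrix
  set Et : Matrix W W ℝ := ∑ π ∈ autSet H, E.submatrix π π with hEt
  have hEtpsd : Et.PosSemidef := by
    rw [hEt]
    have h : ∀ π ∈ autSet H, (E.submatrix (π : W → W) (π : W → W)).PosSemidef :=
      fun π _ => hEpsd.submatrix π
    classical
    refine Finset.sum_induction _ _ (fun a b ha hb => ha.add hb) ?_ h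
    exact Matrix.PosSemidef.zero
  have hEtapply : ∀ x y, Et x y = ∑ π ∈ autSet H, E (π x) (π y) := by
    intro x y
    rw [hEt, Matrix.sum_apply]
    rfl
  have hEsymm : ∀ x y, E x y = E y x := by
    intro x y
    have := congrFun (congrFun (sand_transpose hB ind) y) x
    rw [← hE] at this
    rw [← this]
    rfl
  have hEtsymm : ∀ x y, Et x y = Et y x := by
    intro x y
    rw [hEtapply, hEtapply]
    exact Finset.sum_congr rfl fun π _ => hEsymm _ _
  -- invariance under the automorphism group
  have hEtinv : ∀ σ ∈ autSet H, ∀ x y, Et (σ x) (σ y) = Et x y := by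
    intro σ hσ x y
    rw [hEtapply, hEtapply]
    refine Finset.sum_nbij' (fun π => π * σ) (fun ρ => ρ * σ⁻¹) ?_ ?_ ?_ ?_ ?_
    · intro π hπ; exact hmulmem hπ hσ
    · intro ρ hρ; exact hmulmem hρ (hinvmem hσ)
    · intro π _; group
    · intro ρ _; group
    · intro π _
      rw [Equiv.Perm.mul_apply, Equiv.Perm.mul_apply]
  -- edge constancy
  have hedgeconst : ∀ x y, H.Adj x y →
      Et x y = Et x₀ y₀ ∧ Et x x * Et y y = Et x₀ x₀ * Et y₀ y₀ := by
    intro x y hxy'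
    obtain ⟨ψ, hψ⟩ := hH hxy hxy'
    set π : Equiv.Perm W := ψ.toEquiv with hπdef
    have hmem : π ∈ autSet H := by
      rw [autSet, Finset.mem_filter]
      exact ⟨Finset.mem_univ _, fun u v => ψ.map_adj_iff⟩
    rw [Sym2.eq_iff] at hψ
    rcases hψ with ⟨h1, h2⟩ | ⟨h1, h2⟩
    · have h1' : π x₀ = x := h1
      have h2' : π y₀ = y := h2
      constructor
      · rw [← h1', ← h2', hEtinv _ hmem x₀ y₀]
      · rw [← h1', ← h2', hEtinv _ hmem x₀ x₀, hEtinv _ hmem y₀ y₀]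
    · have h1' : π x₀ = y := h1
      have h2' : π y₀ = x := h2
      constructor
      · rw [← h1', ← h2', hEtinv _ hmem y₀ x₀, hEtsymm y₀ x₀]
      · rw [← h1', ← h2', hEtinv _ hmem y₀ y₀, hEtinv _ hmem x₀ x₀]
        ring
  -- trace of the averaged matrix
  have htrEt : ∑ z, Et z z = ((autSet H).card : ℝ) * g := by
    calc ∑ z, Et z z = ∑ z, ∑ π ∈ autSet H, E (π z) (π z) :=
          Finset.sum_congr rfl fun z _ => hEtapply z z
      _ = ∑ π ∈ autSet H, ∑ z, E (π z) (π z) := Finset.sum_comm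
      _ = ∑ π ∈ autSet H, ∑ z, E z z :=
          Finset.sum_congr rfl fun π _ => Equiv.sum_comp π (fun z => E z z)
      _ = ((autSet H).card : ℝ) * g := by
          rw [Finset.sum_const, htrE, nsmul_eq_mul]
  set m₂ : ℝ := ∑ x, ∑ y, H.adjMatrix ℝ x y with hm2
  have hBnn : ∀ x y, 0 ≤ H.adjMatrix ℝ x y := by
    intro x y
    by_cases h : H.Adj x y <;> simp [SimpleGraph.adjMatrix, h]
  have hm₂pos : 0 < m₂ := by
    have h1 : (1:ℝ) ≤ m₂ := by
      calc (1:ℝ) = H.adjMatrix ℝ x₀ y₀ := hBx₀y₀.symm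
        _ ≤ ∑ y, H.adjMatrix ℝ x₀ y :=
            Finset.single_le_sum (fun y _ => hBnn x₀ y) (Finset.mem_univ y₀)
        _ ≤ m₂ := Finset.single_le_sum
            (fun x _ => Finset.sum_nonneg fun y _ => hBnn x y) (Finset.mem_univ x₀)
    linarith
  -- sum of B * Et, two ways
  have hBEt : ∑ x, ∑ y, H.adjMatrix ℝ x y * Et x y
      = ((autSet H).card : ℝ) * (lamMin H * g) := by
    calc ∑ x, ∑ y, H.adjMatrix ℝ x y * Et x y
        = ∑ x, ∑ y, ∑ π ∈ autSet H, H.adjMatrix ℝ x y * E (π x) (π y) := by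
          refine Finset.sum_congr rfl fun x _ => Finset.sum_congr rfl fun y _ => ?_
          rw [hEtapply, Finset.mul_sum]
      _ = ∑ x, ∑ π ∈ autSet H, ∑ y, H.adjMatrix ℝ x y * E (π x) (π y) :=
          Finset.sum_congr rfl fun x _ => Finset.sum_comm
      _ = ∑ π ∈ autSet H, ∑ x, ∑ y, H.adjMatrix ℝ x y * E (π x) (π y) := Finset.sum_comm
      _ = ∑ π ∈ autSet H, ∑ x, ∑ y, H.adjMatrix ℝ x y * E x y := by
          refine Finset.sum_congr rfl fun π hπ => ?_
          rw [← Fintype.sum_prod_type (f := fun p : W × W =>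
              H.adjMatrix ℝ p.1 p.2 * E (π p.1) (π p.2)),
            ← Fintype.sum_prod_type (f := fun p : W × W =>
              H.adjMatrix ℝ p.1 p.2 * E p.1 p.2)]
          refine Fintype.sum_equiv (Equiv.prodCongr π π) _ _ fun p => ?_
          simp only [Equiv.prodCongr_apply, Prod.map]
          congr 1
          rw [SimpleGraph.adjMatrix_apply, SimpleGraph.adjMatrix_apply]
          exact if_congr ((hadjiff hπ p.1 p.2).symm) rfl rfl
      _ = ((autSet H).card : ℝ) * (lamMin H * g) := by
          rw [Finset.sum_const, hBE, nsmul_eq_mul]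
  have hBEt2 : ∑ x, ∑ y, H.adjMatrix ℝ x y * Et x y = Et x₀ y₀ * m₂ := by
    rw [hm2, Finset.mul_sum]
    refine Finset.sum_congr rfl fun x _ => ?_
    rw [Finset.mul_sum]
    refine Finset.sum_congr rfl fun y _ => ?_
    by_cases hadj : H.Adj x y
    · rw [(hedgeconst x y hadj).1]; ring
    · simp [SimpleGraph.adjMatrix, hadj]
  have hem : Et x₀ y₀ * m₂ = ((autSet H).card : ℝ) * (lamMin H * g) := by
    rw [← hBEt2, hBEt]
  have heneg : Et x₀ y₀ < 0 := by
    have hrhs : ((autSet H).card : ℝ) * (lamMin H * g) < 0 := by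
      apply mul_neg_of_pos_of_neg hΓcard
      exact mul_neg_of_neg_of_pos hlminneg hgpos
    nlinarith
  have hq : (Et x₀ y₀)^2 ≤ Et x₀ x₀ * Et y₀ y₀ := psd_entry_sq_le hEtpsd x₀ y₀
  have hqpos : 0 < Et x₀ x₀ * Et y₀ y₀ := by nlinarith
  -- Rayleigh bound
  have hray : ∀ u : W → ℝ, ∑ x, ∑ y, H.adjMatrix ℝ x y * (u x * u y)
      ≤ lamMax H * ∑ z, (u z)^2 := by
    intro u
    have h1 := sand_quadform hB ev u
    rw [hsandB] at h1
    rw [h1]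
    calc ∑ i, ev i * (∑ x, u x * (hB.eigenvectorUnitary : Matrix W W ℝ) x i)^2
        ≤ ∑ i, lamMax H * (∑ x, u x * (hB.eigenvectorUnitary : Matrix W W ℝ) x i)^2 :=
          Finset.sum_le_sum fun i _ =>
            mul_le_mul_of_nonneg_right (hevleΛ i) (sq_nonneg _)
      _ = lamMax H * ∑ i, (∑ x, u x * (hB.eigenvectorUnitary : Matrix W W ℝ) x i)^2 :=
          (Finset.mul_sum _ _ _).symm
      _ = lamMax H * ∑ z, (u z)^2 := by rw [coeff_norm hB u]
  have hdiagnn : ∀ z, 0 ≤ Et z z := fun z => psd_diag_nonneg hEtpsd z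
  set s : ℝ := Real.sqrt (Et x₀ x₀ * Et y₀ y₀) with hsdef
  have hs : 0 < s := Real.sqrt_pos.mpr hqpos
  have hkey : m₂ * s ≤ lamMax H * (((autSet H).card : ℝ) * g) := by
    have h1 := hray (fun z => Real.sqrt (Et z z))
    have h2 : ∑ x, ∑ y, H.adjMatrix ℝ x y * (Real.sqrt (Et x x) * Real.sqrt (Et y y))
        = m₂ * s := by
      rw [hm2, Finset.sum_mul]
      refine Finset.sum_congr rfl fun x _ => ?_
      rw [Finset.sum_mul]
      refine Finset.sum_congr rfl fun y _ => ?_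
      by_cases hadj : H.Adj x y
      · rw [← Real.sqrt_mul (hdiagnn x), (hedgeconst x y hadj).2, hsdef]
      · simp [SimpleGraph.adjMatrix, hadj]
    have h3 : ∑ z, (Real.sqrt (Et z z))^2 = ((autSet H).card : ℝ) * g := by
      rw [← htrEt]
      exact Finset.sum_congr rfl fun z _ => Real.sq_sqrt (hdiagnn z)
    rw [h2, h3] at h1
    exact h1
  -- the normalized matrix
  set dfun : W → ℝ := fun z => if Et z z = 0 then 0 else (Real.sqrt (Et z z))⁻¹ with hdfun
  set M : Matrix W W ℝ := diagonal dfun * Et * diagonal dfun with hMdef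
  have hMapply : ∀ x y, M x y = dfun x * Et x y * dfun y := by
    intro x y
    rw [hMdef, Matrix.mul_diagonal, Matrix.diagonal_mul]
  have hMpsd : M.PosSemidef := by
    have hst : (diagonal dfun)ᴴ = diagonal dfun := by
      rw [Matrix.diagonal_conjTranspose]
      congr 1
    rw [hMdef]
    have hcm := hEtpsd.conjTranspose_mul_mul_same (diagonal dfun)
    rwa [hst] at hcm
  have hMdiag : ∀ z, M z z ≤ 1 := by
    intro z
    rw [hMapply, hdfun]
    dsimp only
    by_cases h : Et z z = 0
    · rw [if_pos h]; norm_num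
    · rw [if_neg h]
      have hpos : 0 < Et z z := lt_of_le_of_ne (hdiagnn z) (Ne.symm h)
      have hsq : Real.sqrt (Et z z) * Real.sqrt (Et z z) = Et z z :=
        Real.mul_self_sqrt (hdiagnn z)
      have hsp : 0 < Real.sqrt (Et z z) := Real.sqrt_pos.mpr hpos
      rw [show (Real.sqrt (Et z z))⁻¹ * Et z z * (Real.sqrt (Et z z))⁻¹
          = Et z z / (Real.sqrt (Et z z) * Real.sqrt (Et z z)) by ring, hsq]
      rw [div_self (ne_of_gt hpos)]
  set t : ℝ := (-(Et x₀ y₀)) / s with htdef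
  have htpos : 0 < t := div_pos (by linarith) hs
  have hMedge : ∀ x y, H.Adj x y → M x y = -t := by
    intro x y hadj
    obtain ⟨hc1, hc2⟩ := hedgeconst x y hadj
    have hx0 : Et x x ≠ 0 := by
      intro h0
      rw [h0] at hc2
      nlinarith
    have hy0 : Et y y ≠ 0 := by
      intro h0
      rw [h0] at hc2
      nlinarith
    have hxpos : 0 < Et x x := lt_of_le_of_ne (hdiagnn x) (Ne.symm hx0)
    have hypos : 0 < Et y y := lt_of_le_of_ne (hdiagnn y) (Ne.symm hy0)
    rw [hMapply, hdfun]
    dsimp only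
    rw [if_neg hx0, if_neg hy0, hc1, htdef, hsdef, ← hc2, Real.sqrt_mul (hdiagnn x)]
    rw [neg_div, neg_neg]
    rw [div_eq_mul_inv, mul_inv]
    ring
  refine ⟨M, t, hMpsd, hMdiag, hMedge, htpos, ?_, by linarith⟩
  -- the quantitative bound
  have h6 : (-(Et x₀ y₀)) * m₂ = ((autSet H).card : ℝ) * (-(lamMin H)) * g := by
    linear_combination -hem
  have h4 := mul_le_mul_of_nonneg_left hkey (by linarith : (0:ℝ) ≤ -(lamMin H))
  have h3 : ((-(lamMin H)) * s) * m₂ ≤ ((-(Et x₀ y₀)) * lamMax H) * m₂ := by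
    calc ((-(lamMin H)) * s) * m₂ = (-(lamMin H)) * (m₂ * s) := by ring
      _ ≤ (-(lamMin H)) * (lamMax H * (((autSet H).card : ℝ) * g)) := h4
      _ = lamMax H * (((autSet H).card : ℝ) * (-(lamMin H)) * g) := by ring
      _ = lamMax H * ((-(Et x₀ y₀)) * m₂) := by rw [h6]
      _ = ((-(Et x₀ y₀)) * lamMax H) * m₂ := by ring
  have h5 : (-(lamMin H)) * s ≤ (-(Et x₀ y₀)) * lamMax H :=
    le_of_mul_le_mul_right h3 hm₂pos
  rw [htdef, div_mul_eq_mul_div, le_div_iff₀ hs]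
  linarith

end Graphs

end SpectralFrac

/-- **Theorem.** If `G` has an edge and there is a homomorphism from `G` to an edge-transitive
graph `H`, then `λ_max(H)/|λ_min(H)| ≥ max { s⁺(G)/s⁻(G), s⁻(G)/s⁺(G) }`. -/
theorem SpectralFrac.hom_to_edgeTransitive_spectral_bound {V W : Type*}
    [Fintype V] [DecidableEq V] [Fintype W] [DecidableEq W]
    (G : SimpleGraph V) [DecidableRel G.Adj] (H : SimpleGraph W) [DecidableRel H.Adj]
    (hG : G.edgeSet.Nonempty) (hH : IsEdgeTransitive H) (hhom : Nonempty (G →g H)) :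
    max (sPos G / sNeg G) (sNeg G / sPos G) ≤ lamMax H / |lamMin H| := by
  classical
  obtain ⟨e, he⟩ := hG
  induction e using Sym2.ind with
  | _ a b =>
  rw [SimpleGraph.mem_edgeSet] at he
  obtain ⟨f⟩ := hhom
  have hfab : H.Adj (f a) (f b) := f.map_adj he
  obtain ⟨P, N, hP, hN, hPNoff, horth, hPsum, hNsum, hPNedge⟩ := exists_PN G
  obtain ⟨M, t, hMpsd, hMdiag, hMedge, htpos, hbound, hdpos⟩ := exists_good_matrix H hH hfab
  -- pull back M along the homomorphism
  set Mh : Matrix V V ℝ := M.submatrix (fun v => f v) (fun v => f v) with hMh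
  have hMhpsd : Mh.PosSemidef := hMpsd.submatrix _
  have hMhdiag : ∀ u, Mh u u ≤ 1 := fun u => hMdiag (f u)
  have hMhedge : ∀ u v, G.Adj u v → Mh u v = -t := fun u v huv => hMedge _ _ (f.map_adj huv)
  have hsupp : ∀ u v, Mh u v ≠ -t → P u v = N u v := by
    intro u v hne
    by_cases hadj : G.Adj u v
    · exact absurd (hMhedge u v hadj) hne
    · exact hPNoff u v hadj
  have hsupp' : ∀ u v, Mh u v ≠ -t → N u v = P u v := fun u v hne => (hsupp u v hne).symm
  have horth' : ∑ u, ∑ v, N u v * P u v = 0 := by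
    rw [← horth]
    exact Finset.sum_congr rfl fun u _ => Finset.sum_congr rfl fun v _ => mul_comm _ _
  have ht1 : t * sPos G ≤ sNeg G := by
    rw [← hPsum, ← hNsum]
    exact main_twosided htpos.le hP hN hMhpsd hMhdiag hsupp horth
  have ht2 : t * sNeg G ≤ sPos G := by
    rw [← hPsum, ← hNsum]
    exact main_twosided htpos.le hN hP hMhpsd hMhdiag hsupp' horth'
  -- positivity of sPos and sNeg
  have hsum_pos : 0 < sPos G + sNeg G := by
    have hexp : ∀ u v, (P u v - N u v)^2 = (P u v)^2 - 2 * (P u v * N u v) + (N u v)^2 := by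
      intro u v; ring
    have h1 : ∑ u, ∑ v, (P u v - N u v)^2 = sPos G + sNeg G := by
      calc ∑ u, ∑ v, (P u v - N u v)^2
          = ∑ u, ∑ v, ((P u v)^2 - 2 * (P u v * N u v) + (N u v)^2) :=
            Finset.sum_congr rfl fun u _ => Finset.sum_congr rfl fun v _ => hexp u v
        _ = (∑ u, ∑ v, (P u v)^2) - 2 * (∑ u, ∑ v, P u v * N u v)
              + (∑ u, ∑ v, (N u v)^2) := by
            rw [Finset.mul_sum]
            rw [← Finset.sum_sub_distrib, ← Finset.sum_add_distrib]
            refine Finset.sum_congr rfl fun u _ => ?_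
            rw [Finset.mul_sum, ← Finset.sum_sub_distrib, ← Finset.sum_add_distrib]
        _ = sPos G + sNeg G := by rw [hPsum, hNsum, horth]; ring
    have h2 : (1:ℝ) ≤ ∑ u, ∑ v, (P u v - N u v)^2 := by
      have hab1 : (P a b - N a b)^2 = 1 := by rw [hPNedge a b he]; norm_num
      calc (1:ℝ) = (P a b - N a b)^2 := hab1.symm
        _ ≤ ∑ v, (P a v - N a v)^2 :=
            Finset.single_le_sum (f := fun v => (P a v - N a v)^2)
              (fun v _ => sq_nonneg _) (Finset.mem_univ b)
        _ ≤ ∑ u, ∑ v, (P u v - N u v)^2 :=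
            Finset.single_le_sum (f := fun u => ∑ v, (P u v - N u v)^2)
              (fun u _ => Finset.sum_nonneg fun v _ => sq_nonneg _) (Finset.mem_univ a)
    linarith
  have hspos_nonneg : 0 ≤ sPos G := by
    rw [← hPsum]
    exact Finset.sum_nonneg fun u _ => Finset.sum_nonneg fun v _ => sq_nonneg _
  have hsneg_nonneg : 0 ≤ sNeg G := by
    rw [← hNsum]
    exact Finset.sum_nonneg fun u _ => Finset.sum_nonneg fun v _ => sq_nonneg _
  have hspos : 0 < sPos G := by
    rcases lt_or_eq_of_le hspos_nonneg with h | h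
    · exact h
    · exfalso; nlinarith
  have hsneg : 0 < sNeg G := by
    rcases lt_or_eq_of_le hsneg_nonneg with h | h
    · exact h
    · exfalso; nlinarith
  -- the largest eigenvalue of H is positive
  have hΛpos : 0 < lamMax H := by nlinarith
  have habs : |lamMin H| = -(lamMin H) := abs_of_neg (by linarith)
  rw [habs]
  rw [max_le_iff]
  constructor
  · rw [div_le_div_iff₀ hsneg hdpos]
    nlinarith
  · rw [div_le_div_iff₀ hspos hdpos]
    nlinarith
end

section
/- For any finite simple graph G with at least one edge, the chromatic number of G satisfies χ(G) ≥ 1 + max{ s⁺(G)/s⁻(G), s⁻(G)/s⁺(G) }. -/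
open Matrix Finset

set_option linter.unusedSectionVars false

namespace SpectralFracAux

variable {V : Type*} [Fintype V] [DecidableEq V]

/-- Frobenius inner product of real square matrices. -/
noncomputable def ip (M N : Matrix V V ℝ) : ℝ := Matrix.trace (M * Nᴴ)

lemma ip_eq_sum (M N : Matrix V V ℝ) : ip M N = ∑ u, ∑ v, M u v * N u v := by
  simp [ip, Matrix.trace, Matrix.diag, Matrix.mul_apply, Matrix.conjTranspose_apply]

lemma ip_self_nonneg (M : Matrix V V ℝ) : 0 ≤ ip M M := by
  rw [ip_eq_sum]
  exact Finset.sum_nonneg fun u _ => Finset.sum_nonneg fun v _ => mul_self_nonneg _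

lemma ip_sq_le (M N : Matrix V V ℝ) : (ip M N) ^ 2 ≤ ip M M * ip N N := by
  rw [ip_eq_sum, ip_eq_sum, ip_eq_sum]
  have h := Finset.sum_mul_sq_le_sq_mul_sq Finset.univ
    (fun p : V × V => M p.1 p.2) (fun p : V × V => N p.1 p.2)
  simpa [Fintype.sum_prod_type, pow_two] using h

lemma ip_le (M N : Matrix V V ℝ) :
    ip M N ≤ Real.sqrt (ip M M) * Real.sqrt (ip N N) := by
  calc ip M N ≤ |ip M N| := le_abs_self _
    _ = Real.sqrt ((ip M N) ^ 2) := (Real.sqrt_sq_eq_abs _).symm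
    _ ≤ Real.sqrt (ip M M * ip N N) := Real.sqrt_le_sqrt (ip_sq_le M N)
    _ = _ := Real.sqrt_mul (ip_self_nonneg M) _

/-- Diagonal 0/1 projection onto a color class. -/
def colP {k : ℕ} (c : V → Fin k) (i : Fin k) : Matrix V V ℝ :=
  Matrix.diagonal (fun v => if c v = i then 1 else 0)

lemma colP_herm {k : ℕ} (c : V → Fin k) (i : Fin k) : (colP c i)ᴴ = colP c i := by
  simp [colP, Matrix.diagonal_conjTranspose]

lemma colP_mul_apply {k : ℕ} (c : V → Fin k) (i j : Fin k) (B : Matrix V V ℝ) (u v : V) :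
    (colP c i * B * colP c j) u v = if c u = i ∧ c v = j then B u v else 0 := by
  simp only [colP, Matrix.diagonal_mul, Matrix.mul_diagonal]
  by_cases h1 : c u = i <;> by_cases h2 : c v = j <;> simp [h1, h2]

/-- The Frobenius norm squared of the `(i,j)` block. -/
noncomputable def blk {k : ℕ} (c : V → Fin k) (B : Matrix V V ℝ) (i j : Fin k) : ℝ :=
  ∑ u ∈ Finset.univ.filter (fun u => c u = i),
    ∑ v ∈ Finset.univ.filter (fun v => c v = j), (B u v) ^ 2

lemma blk_nonneg {k : ℕ} (c : V → Fin k) (B : Matrix V V ℝ) (i j : Fin k) :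
    0 ≤ blk c B i j := by
  exact Finset.sum_nonneg fun u _ => Finset.sum_nonneg fun v _ => sq_nonneg _

lemma ip_block {k : ℕ} (c : V → Fin k) (B : Matrix V V ℝ) (i j : Fin k) :
    ip (colP c i * B * colP c j) (colP c i * B * colP c j) = blk c B i j := by
  rw [ip_eq_sum, blk, Finset.sum_filter]
  refine Finset.sum_congr rfl fun u _ => ?_
  by_cases h1 : c u = i
  · rw [if_pos h1, Finset.sum_filter]
    refine Finset.sum_congr rfl fun v _ => ?_
    by_cases h2 : c v = j <;> simp [colP_mul_apply, h1, h2, pow_two]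
  · rw [if_neg h1]
    refine Finset.sum_eq_zero fun v _ => ?_
    simp [colP_mul_apply, h1]

lemma ip_gram (X Y : Matrix V V ℝ) : ip (Xᴴ * Y) (Xᴴ * Y) = ip (X * Xᴴ) (Y * Yᴴ) := by
  unfold ip
  rw [conjTranspose_mul, conjTranspose_conjTranspose,
      conjTranspose_mul, conjTranspose_conjTranspose]
  rw [show Xᴴ * Y * (Yᴴ * X) = Xᴴ * (Y * Yᴴ * X) by
    rw [Matrix.mul_assoc, Matrix.mul_assoc]]
  rw [Matrix.trace_mul_comm]
  rw [show Y * Yᴴ * X * Xᴴ = Y * Yᴴ * (X * Xᴴ) from Matrix.mul_assoc _ _ _]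
  rw [Matrix.trace_mul_comm]

lemma ip_gram_self (X : Matrix V V ℝ) : ip (X * Xᴴ) (X * Xᴴ) = ip (Xᴴ * X) (Xᴴ * X) := by
  unfold ip
  rw [conjTranspose_mul, conjTranspose_conjTranspose,
      conjTranspose_mul, conjTranspose_conjTranspose]
  rw [show X * Xᴴ * (X * Xᴴ) = X * (Xᴴ * X * Xᴴ) by
    simp only [Matrix.mul_assoc]]
  rw [Matrix.trace_mul_comm]
  rw [show Xᴴ * X * Xᴴ * X = Xᴴ * X * (Xᴴ * X) from Matrix.mul_assoc _ _ _]

lemma colP_gram {k : ℕ} (c : V → Fin k) (W : Matrix V V ℝ) (i j : Fin k) :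
    (W * colP c i)ᴴ * (W * colP c j) = colP c i * (Wᴴ * W) * colP c j := by
  rw [conjTranspose_mul, colP_herm, Matrix.mul_assoc, Matrix.mul_assoc, Matrix.mul_assoc]

lemma blk_le {k : ℕ} (c : V → Fin k) (W : Matrix V V ℝ) (i j : Fin k) :
    blk c (Wᴴ * W) i j ≤
      Real.sqrt (blk c (Wᴴ * W) i i) * Real.sqrt (blk c (Wᴴ * W) j j) := by
  calc blk c (Wᴴ * W) i j
      = ip ((W * colP c i)ᴴ * (W * colP c j)) ((W * colP c i)ᴴ * (W * colP c j)) := by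
        rw [colP_gram, ip_block]
    _ = ip ((W * colP c i) * (W * colP c i)ᴴ) ((W * colP c j) * (W * colP c j)ᴴ) :=
        ip_gram _ _
    _ ≤ Real.sqrt (ip ((W * colP c i) * (W * colP c i)ᴴ) ((W * colP c i) * (W * colP c i)ᴴ))
        * Real.sqrt (ip ((W * colP c j) * (W * colP c j)ᴴ) ((W * colP c j) * (W * colP c j)ᴴ)) :=
        ip_le _ _
    _ = _ := by rw [ip_gram_self, ip_gram_self, colP_gram, colP_gram, ip_block, ip_block]

lemma sum_blk_eq {k : ℕ} (c : V → Fin k) (B : Matrix V V ℝ) :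
    ∑ i, ∑ j, blk c B i j = ∑ u, ∑ v, (B u v) ^ 2 := by
  unfold blk
  have e1 : ∀ i : Fin k,
      ∑ j, ∑ u ∈ Finset.univ.filter (fun u => c u = i),
        ∑ v ∈ Finset.univ.filter (fun v => c v = j), (B u v) ^ 2
      = ∑ u ∈ Finset.univ.filter (fun u => c u = i), ∑ v, (B u v) ^ 2 := by
    intro i
    rw [Finset.sum_comm]
    exact Finset.sum_congr rfl fun u _ => Finset.sum_fiberwise _ _ _
  rw [Finset.sum_congr rfl fun i _ => e1 i]
  exact Finset.sum_fiberwise _ _ _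

lemma sum_sq_le_card_mul_diag {k : ℕ} (c : V → Fin k) (W : Matrix V V ℝ) :
    ∑ u, ∑ v, ((Wᴴ * W) u v) ^ 2 ≤ (k : ℝ) * ∑ i, blk c (Wᴴ * W) i i := by
  rw [← sum_blk_eq c]
  calc ∑ i, ∑ j, blk c (Wᴴ * W) i j
      ≤ ∑ i, ∑ j, Real.sqrt (blk c (Wᴴ * W) i i) * Real.sqrt (blk c (Wᴴ * W) j j) := by
        refine Finset.sum_le_sum fun i _ => Finset.sum_le_sum fun j _ => blk_le c W i j
    _ = (∑ i, Real.sqrt (blk c (Wᴴ * W) i i)) ^ 2 := by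
        rw [pow_two, Finset.sum_mul_sum]
    _ ≤ (Finset.univ.card : ℝ) * ∑ i, (Real.sqrt (blk c (Wᴴ * W) i i)) ^ 2 :=
        sq_sum_le_card_mul_sum_sq
    _ = (k : ℝ) * ∑ i, blk c (Wᴴ * W) i i := by
        rw [Finset.card_univ, Fintype.card_fin]
        congr 1
        exact Finset.sum_congr rfl fun i _ => Real.sq_sqrt (blk_nonneg c _ i i)



lemma key_ineq {k : ℕ} (hk : 1 ≤ k) (c : V → Fin k) (W X : Matrix V V ℝ)
    (hsame : ∀ u v, c u = c v → (Wᴴ * W) u v = (Xᴴ * X) u v)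
    (horth : ip (Wᴴ * W) (Xᴴ * X) = 0) :
    ip (Wᴴ * W) (Wᴴ * W) ≤ ((k : ℝ) - 1) * ip (Xᴴ * X) (Xᴴ * X) := by
  classical
  set B := Wᴴ * W with hB
  set C := Xᴴ * X with hC
  set sEq : Finset (V × V) := Finset.univ.filter (fun p => c p.1 = c p.2) with hsEq
  set sNe : Finset (V × V) := Finset.univ.filter (fun p => ¬ c p.1 = c p.2) with hsNe
  -- splitting of the full entrywise sum
  have hsum : ∀ M N : Matrix V V ℝ,
      ip M N = (∑ p ∈ sEq, M p.1 p.2 * N p.1 p.2) + ∑ p ∈ sNe, M p.1 p.2 * N p.1 p.2 := by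
    intro M N
    rw [ip_eq_sum, hsEq, hsNe,
      Finset.sum_filter_add_sum_filter_not Finset.univ (fun p : V × V => c p.1 = c p.2)
        (fun p : V × V => M p.1 p.2 * N p.1 p.2)]
    exact (Fintype.sum_prod_type (fun p : V × V => M p.1 p.2 * N p.1 p.2)).symm
  set d : ℝ := ∑ p ∈ sEq, (B p.1 p.2) ^ 2 with hd
  set bb : ℝ := ∑ p ∈ sNe, (B p.1 p.2) ^ 2 with hbb
  set gg : ℝ := ∑ p ∈ sNe, (C p.1 p.2) ^ 2 with hgg
  have hd0 : 0 ≤ d := Finset.sum_nonneg fun p _ => sq_nonneg _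
  have hbb0 : 0 ≤ bb := Finset.sum_nonneg fun p _ => sq_nonneg _
  have hgg0 : 0 ≤ gg := Finset.sum_nonneg fun p _ => sq_nonneg _
  have hmemEq : ∀ p ∈ sEq, B p.1 p.2 = C p.1 p.2 := by
    intro p hp
    rw [hsEq, Finset.mem_filter] at hp
    exact hsame _ _ hp.2
  have hCeq : (∑ p ∈ sEq, (C p.1 p.2) ^ 2) = d := by
    rw [hd]; exact Finset.sum_congr rfl fun p hp => by rw [hmemEq p hp]
  -- ip B B = d + bb , ip C C = d + gg
  have hipB : ip B B = d + bb := by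
    rw [hsum B B, hd, hbb]
    congr 1 <;> exact Finset.sum_congr rfl fun p _ => (pow_two _).symm
  have hipC : ip C C = d + gg := by
    rw [hsum C C, ← hCeq, hgg]
    congr 1 <;> exact Finset.sum_congr rfl fun p _ => (pow_two _).symm
  -- orthogonality gives the cross sum
  have hcross : (∑ p ∈ sNe, B p.1 p.2 * C p.1 p.2) = -d := by
    have h0 := horth
    rw [hsum B C] at h0
    have h1 : (∑ p ∈ sEq, B p.1 p.2 * C p.1 p.2) = d := by
      rw [hd]
      exact Finset.sum_congr rfl fun p hp => by rw [← hmemEq p hp, pow_two]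
    linarith [h0, h1]
  -- Cauchy–Schwarz on the off-diagonal part
  have hd2 : d ^ 2 ≤ bb * gg := by
    have h := Finset.sum_mul_sq_le_sq_mul_sq sNe
      (fun p : V × V => B p.1 p.2) (fun p : V × V => C p.1 p.2)
    rw [hcross] at h
    simpa [hbb, hgg] using h
  -- the pinching bound : d + bb ≤ k * d
  have hdiag : ∑ i, blk c B i i = d := by
    rw [hd, ← Finset.sum_fiberwise sEq (fun p => c p.1) (fun p => (B p.1 p.2) ^ 2)]
    refine Finset.sum_congr rfl fun i _ => ?_
    have hset : sEq.filter (fun p => c p.1 = i)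
        = (Finset.univ.filter (fun u => c u = i)) ×ˢ (Finset.univ.filter (fun v => c v = i)) := by
      ext ⟨u, v⟩
      simp only [hsEq, Finset.mem_filter, Finset.mem_product, Finset.mem_univ, true_and]
      constructor
      · rintro ⟨h1, h2⟩; exact ⟨h2, h1.symm.trans h2⟩
      · rintro ⟨h1, h2⟩; exact ⟨h1.trans h2.symm, h1⟩
    rw [blk, ← Finset.sum_product', ← hset]
  have hbk : d + bb ≤ (k : ℝ) * d := by
    have h := sum_sq_le_card_mul_diag c W
    rw [hdiag] at h
    have h2 : ip B B = ∑ u, ∑ v, (B u v) ^ 2 := by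
      rw [ip_eq_sum]
      exact Finset.sum_congr rfl fun u _ => Finset.sum_congr rfl fun v _ => (pow_two _).symm
    rw [← h2, hipB] at h
    exact h
  -- final arithmetic
  rw [hipB, hipC]
  have hkR : (1 : ℝ) ≤ (k : ℝ) := by exact_mod_cast hk
  rcases le_or_gt d 0 with hdle | hdpos
  · have hdz : d = 0 := le_antisymm hdle hd0
    have hbz : bb ≤ 0 := by
      have : (k : ℝ) * d = 0 := by rw [hdz, mul_zero]
      linarith
    have : bb = 0 := le_antisymm hbz hbb0
    rw [hdz, this]
    have : 0 ≤ ((k : ℝ) - 1) * (0 + gg) := by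
      apply mul_nonneg (by linarith) (by linarith)
    linarith
  · have h1 : bb ≤ ((k : ℝ) - 1) * d := by nlinarith [hbk]
    have h2 : d * d ≤ ((k : ℝ) - 1) * gg * d := by
      calc d * d = d ^ 2 := (pow_two d).symm
        _ ≤ bb * gg := hd2
        _ ≤ (((k : ℝ) - 1) * d) * gg := mul_le_mul_of_nonneg_right h1 hgg0
        _ = ((k : ℝ) - 1) * gg * d := by ring
    have h3 : d ≤ ((k : ℝ) - 1) * gg := le_of_mul_le_mul_right h2 hdpos
    nlinarith [hbk, h1, h3]

end SpectralFracAux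

/-- **Theorem (Ando–Lin).** For any finite simple graph `G` with at least one edge,
`χ(G) ≥ 1 + max { s⁺(G)/s⁻(G), s⁻(G)/s⁺(G) }`. -/
theorem SpectralFrac.chromaticNumber_ge_one_add_max {V : Type*} [Fintype V] [DecidableEq V]
    (G : SimpleGraph V) [DecidableRel G.Adj] (hG : G.edgeSet.Nonempty) :
    1 + max (sPos G / sNeg G) (sNeg G / sPos G) ≤ (G.chromaticNumber.toNat : ℝ) := by

  classical
  obtain ⟨u0, v0, huv⟩ : ∃ u v, G.Adj u v := by
    obtain ⟨e, he⟩ := hG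
    induction e using Sym2.ind with
    | _ u v => exact ⟨u, v, he⟩
  set k := G.chromaticNumber.toNat with hkdef
  obtain ⟨col⟩ : G.Colorable k := G.colorable_chromaticNumber_of_fintype
  have hk2 : 2 ≤ k := by
    have hne : col u0 ≠ col v0 := col.valid huv
    have hnt : Nontrivial (Fin k) := ⟨⟨col u0, col v0, hne⟩⟩
    have h1 : 1 < Fintype.card (Fin k) := Fintype.one_lt_card
    rw [Fintype.card_fin] at h1
    omega
  -- spectral setup
  set lam : V → ℝ := (SpectralFrac.adjMatrix_isHermitian G).eigenvalues with hlam
  set U : Matrix V V ℝ :=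
    ((SpectralFrac.adjMatrix_isHermitian G).eigenvectorUnitary : Matrix V V ℝ) with hUdef
  have hU1 : Uᴴ * U = 1 := by
    rw [← Matrix.star_eq_conjTranspose]
    exact ((Unitary.mem_iff).mp
      (SpectralFrac.adjMatrix_isHermitian G).eigenvectorUnitary.2).1
  have htr : ∀ f : V → ℝ, Matrix.trace (U * Matrix.diagonal f * Uᴴ) = ∑ i, f i := by
    intro f
    rw [Matrix.trace_mul_comm, ← Matrix.mul_assoc, hU1, Matrix.one_mul, Matrix.trace_diagonal]
  have hmul : ∀ f g : V → ℝ,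
      (U * Matrix.diagonal f * Uᴴ) * (U * Matrix.diagonal g * Uᴴ)
        = U * Matrix.diagonal (fun i => f i * g i) * Uᴴ := by
    intro f g
    have hmid : Uᴴ * (U * (Matrix.diagonal g * Uᴴ)) = Matrix.diagonal g * Uᴴ := by
      rw [← Matrix.mul_assoc Uᴴ U, hU1, Matrix.one_mul]
    calc (U * Matrix.diagonal f * Uᴴ) * (U * Matrix.diagonal g * Uᴴ)
        = U * (Matrix.diagonal f * (Uᴴ * (U * (Matrix.diagonal g * Uᴴ)))) := by
          simp only [Matrix.mul_assoc]
      _ = U * (Matrix.diagonal f * (Matrix.diagonal g * Uᴴ)) := by rw [hmid]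
      _ = U * Matrix.diagonal (fun i => f i * g i) * Uᴴ := by
          rw [show Matrix.diagonal f * (Matrix.diagonal g * Uᴴ)
              = Matrix.diagonal f * Matrix.diagonal g * Uᴴ from (Matrix.mul_assoc _ _ _).symm,
            Matrix.diagonal_mul_diagonal]
          simp only [Matrix.mul_assoc]
  have hherm : ∀ f : V → ℝ, (U * Matrix.diagonal f * Uᴴ)ᴴ = U * Matrix.diagonal f * Uᴴ := by
    intro f
    rw [Matrix.conjTranspose_mul, Matrix.conjTranspose_mul, Matrix.conjTranspose_conjTranspose,
      Matrix.diagonal_conjTranspose]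
    have : star f = f := by funext i; simp
    rw [this]
    simp only [Matrix.mul_assoc]
  have hAspec : G.adjMatrix ℝ = U * Matrix.diagonal lam * Uᴴ := by
    have h := (SpectralFrac.adjMatrix_isHermitian G).spectral_theorem
    rw [Unitary.conjStarAlgAut_apply, Matrix.star_eq_conjTranspose] at h
    simpa [RCLike.ofReal_real_eq_id, Function.comp] using h
  set p : V → ℝ := fun i => max (lam i) 0 with hpdef
  set m : V → ℝ := fun i => max (-lam i) 0 with hmdef
  have hp0 : ∀ i, 0 ≤ p i := fun i => le_max_right _ _
  have hm0 : ∀ i, 0 ≤ m i := fun i => le_max_right _ _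
  have hpm : ∀ i, p i - m i = lam i := fun i => max_zero_sub_max_neg_zero_eq_self _
  have hpm0 : ∀ i, p i * m i = 0 := by
    intro i
    rcases le_total (lam i) 0 with h | h
    · have hz : p i = 0 := max_eq_right h
      rw [hz, zero_mul]
    · have hz : m i = 0 := max_eq_right (by simpa using h)
      rw [hz, mul_zero]
  -- Gram factorizations
  have hW : ∀ f : V → ℝ, (∀ i, 0 ≤ f i) →
      (Matrix.diagonal (fun i => Real.sqrt (f i)) * Uᴴ)ᴴ
        * (Matrix.diagonal (fun i => Real.sqrt (f i)) * Uᴴ)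
      = U * Matrix.diagonal f * Uᴴ := by
    intro f hf
    rw [Matrix.conjTranspose_mul, Matrix.conjTranspose_conjTranspose,
      Matrix.diagonal_conjTranspose]
    have hst : star (fun i => Real.sqrt (f i)) = fun i => Real.sqrt (f i) := by
      funext i; simp
    rw [hst]
    calc U * Matrix.diagonal (fun i => Real.sqrt (f i))
          * (Matrix.diagonal (fun i => Real.sqrt (f i)) * Uᴴ)
        = U * (Matrix.diagonal (fun i => Real.sqrt (f i))
            * Matrix.diagonal (fun i => Real.sqrt (f i))) * Uᴴ := by
          simp only [Matrix.mul_assoc]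
      _ = U * Matrix.diagonal f * Uᴴ := by
          rw [Matrix.diagonal_mul_diagonal]
          have : (fun i => Real.sqrt (f i) * Real.sqrt (f i)) = f := by
            funext i; exact Real.mul_self_sqrt (hf i)
          rw [this]
  set WB : Matrix V V ℝ := Matrix.diagonal (fun i => Real.sqrt (p i)) * Uᴴ with hWBdef
  set WC : Matrix V V ℝ := Matrix.diagonal (fun i => Real.sqrt (m i)) * Uᴴ with hWCdef
  have hWB : WBᴴ * WB = U * Matrix.diagonal p * Uᴴ := hW p hp0
  have hWC : WCᴴ * WC = U * Matrix.diagonal m * Uᴴ := hW m hm0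
  -- orthogonality
  have horthBC : SpectralFracAux.ip (U * Matrix.diagonal p * Uᴴ) (U * Matrix.diagonal m * Uᴴ) = 0 := by
    unfold SpectralFracAux.ip
    rw [hherm m, hmul p m, htr]
    exact Finset.sum_eq_zero fun i _ => hpm0 i
  have horthCB : SpectralFracAux.ip (U * Matrix.diagonal m * Uᴴ) (U * Matrix.diagonal p * Uᴴ) = 0 := by
    unfold SpectralFracAux.ip
    rw [hherm p, hmul m p, htr]
    exact Finset.sum_eq_zero fun i _ => by rw [mul_comm]; exact hpm0 i
  -- norms
  have hipBB : SpectralFracAux.ip (U * Matrix.diagonal p * Uᴴ) (U * Matrix.diagonal p * Uᴴ)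
      = SpectralFrac.sPos G := by
    unfold SpectralFracAux.ip
    rw [hherm p, hmul p p, htr]
    unfold SpectralFrac.sPos
    rw [← hlam]
    refine Finset.sum_congr rfl fun i _ => ?_
    rcases lt_or_ge 0 (lam i) with h | h
    · rw [if_pos h]
      have : p i = lam i := max_eq_left h.le
      rw [this, pow_two]
    · rw [if_neg (not_lt.mpr h)]
      have : p i = 0 := max_eq_right h
      rw [this, mul_zero]
  have hipCC : SpectralFracAux.ip (U * Matrix.diagonal m * Uᴴ) (U * Matrix.diagonal m * Uᴴ)
      = SpectralFrac.sNeg G := by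
    unfold SpectralFracAux.ip
    rw [hherm m, hmul m m, htr]
    unfold SpectralFrac.sNeg
    rw [← hlam]
    refine Finset.sum_congr rfl fun i _ => ?_
    rcases lt_or_ge (lam i) 0 with h | h
    · rw [if_pos h]
      have : m i = -lam i := max_eq_left (by linarith)
      rw [this]; ring
    · rw [if_neg (not_lt.mpr h)]
      have : m i = 0 := max_eq_right (by simpa using h)
      rw [this, mul_zero]
  -- same-color entries agree
  have hBC : (U * Matrix.diagonal p * Uᴴ) - (U * Matrix.diagonal m * Uᴴ) = G.adjMatrix ℝ := by
    rw [hAspec, ← Matrix.sub_mul, ← Matrix.mul_sub, Matrix.diagonal_sub]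
    have : (fun i => p i - m i) = lam := funext fun i => hpm i
    rw [this]
  have hAzero : ∀ u v : V, col u = col v → (G.adjMatrix ℝ) u v = 0 := by
    intro u v h
    by_cases hadj : G.Adj u v
    · exact absurd h (col.valid hadj)
    · simp [SimpleGraph.adjMatrix_apply, hadj]
  have hsame : ∀ u v : V, col u = col v →
      (U * Matrix.diagonal p * Uᴴ) u v = (U * Matrix.diagonal m * Uᴴ) u v := by
    intro u v h
    have h1 := congrFun (congrFun hBC u) v
    rw [Matrix.sub_apply] at h1
    have h2 := hAzero u v h
    rw [h2] at h1
    linarith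
  -- trace of A is zero, hence the eigenvalue sum vanishes
  have htrlam : ∑ i, lam i = 0 := by
    have h1 : Matrix.trace (G.adjMatrix ℝ) = 0 := SimpleGraph.trace_adjMatrix ℝ G
    rw [hAspec, htr] at h1
    exact h1
  have hlam_ne : ¬ (∀ i, lam i = 0) := by
    intro hall
    have hz : lam = 0 := funext hall
    have hA0 : G.adjMatrix ℝ = 0 := by
      rw [hAspec, hz]
      have hdz : Matrix.diagonal (0 : V → ℝ) = 0 := Matrix.diagonal_zero
      rw [hdz, Matrix.mul_zero, Matrix.zero_mul]
    have hcontr := congrFun (congrFun hA0 u0) v0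
    simp [SimpleGraph.adjMatrix_apply, huv] at hcontr
  -- positivity of sPos and sNeg
  have hsPos_eq : SpectralFrac.sPos G = ∑ i, if 0 < lam i then (lam i) ^ 2 else 0 := by
    unfold SpectralFrac.sPos; rw [← hlam]
  have hsNeg_eq : SpectralFrac.sNeg G = ∑ i, if lam i < 0 then (lam i) ^ 2 else 0 := by
    unfold SpectralFrac.sNeg; rw [← hlam]
  have hsPos_nn : 0 ≤ SpectralFrac.sPos G := by
    rw [hsPos_eq]
    exact Finset.sum_nonneg fun i _ => by by_cases h : 0 < lam i <;> simp [h, sq_nonneg]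
  have hsNeg_nn : 0 ≤ SpectralFrac.sNeg G := by
    rw [hsNeg_eq]
    exact Finset.sum_nonneg fun i _ => by by_cases h : lam i < 0 <;> simp [h, sq_nonneg]
  have hsPos : 0 < SpectralFrac.sPos G := by
    rcases hsPos_nn.lt_or_eq with h | h
    · exact h
    rw [hsPos_eq] at h
    exfalso
    have hall := (Finset.sum_eq_zero_iff_of_nonneg
      (fun i _ => by by_cases hi : 0 < lam i <;> simp [hi, sq_nonneg])).mp h.symm
    have hle : ∀ i ∈ Finset.univ, lam i ≤ 0 := by
      intro i hi
      by_contra hpos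
      push_neg at hpos
      have h2 := hall i hi
      rw [if_pos hpos] at h2
      nlinarith
    have hall0 := (Finset.sum_eq_zero_iff_of_nonpos hle).mp htrlam
    exact hlam_ne fun i => hall0 i (Finset.mem_univ i)
  have hsNeg : 0 < SpectralFrac.sNeg G := by
    rcases hsNeg_nn.lt_or_eq with h | h
    · exact h
    rw [hsNeg_eq] at h
    exfalso
    have hall := (Finset.sum_eq_zero_iff_of_nonneg
      (fun i _ => by by_cases hi : lam i < 0 <;> simp [hi, sq_nonneg])).mp h.symm
    have hge : ∀ i ∈ Finset.univ, 0 ≤ lam i := by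
      intro i hi
      by_contra hneg
      push_neg at hneg
      have := hall i hi
      rw [if_pos hneg] at this
      nlinarith
    have hall0 := (Finset.sum_eq_zero_iff_of_nonneg hge).mp htrlam
    exact hlam_ne fun i => hall0 i (Finset.mem_univ i)
  -- apply the key inequality in both directions
  have key1 : SpectralFrac.sPos G ≤ ((k : ℝ) - 1) * SpectralFrac.sNeg G := by
    have h := SpectralFracAux.key_ineq (show 1 ≤ k by omega) (fun v => col v) WB WC
      (by intro u v h; rw [hWB, hWC]; exact hsame u v h)
      (by rw [hWB, hWC]; exact horthBC)
    rw [hWB, hWC, hipBB, hipCC] at h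
    exact h
  have key2 : SpectralFrac.sNeg G ≤ ((k : ℝ) - 1) * SpectralFrac.sPos G := by
    have h := SpectralFracAux.key_ineq (show 1 ≤ k by omega) (fun v => col v) WC WB
      (by intro u v h; rw [hWB, hWC]; exact (hsame u v h).symm)
      (by rw [hWB, hWC]; exact horthCB)
    rw [hWB, hWC, hipBB, hipCC] at h
    exact h
  have h1 : SpectralFrac.sPos G / SpectralFrac.sNeg G ≤ (k : ℝ) - 1 :=
    (div_le_iff₀ hsNeg).mpr key1
  have h2 : SpectralFrac.sNeg G / SpectralFrac.sPos G ≤ (k : ℝ) - 1 :=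
    (div_le_iff₀ hsPos).mpr key2
  have hmax := max_le h1 h2
  have hk2R : (2 : ℝ) ≤ (k : ℝ) := by exact_mod_cast hk2
  linarith
end

section
/- Let H be a finite simple graph, with at least one edge, that is both vertex-transitive and edge-transitive, let G be a finite simple graph equipped with an H-partition ⨆_{u ∈ V(H)} V_u, and let X be a real symmetric positive semidefinite matrix with rows and columns indexed by V(G). Then ‖X‖² ≤ (1 + λ_max(H)/|λ_min(H)|) · Σ_{(u,v) : u,v ∈ V(H), {u,v} ∉ E(H)} ‖X_[u,v]‖², where the sum runs over all ordered pairs (u,v) of vertices of H (including u = v) that do not form an edge of H. -/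
open Matrix Finset

namespace SpectralFracAux

open Matrix Finset

variable {W : Type*} [Fintype W] [DecidableEq W]

lemma swap4 {α β : Type*} [Fintype α] [Fintype β] (F : α → α → β → β → ℝ) :
    ∑ u, ∑ v, ∑ a, ∑ b, F u v a b = ∑ a, ∑ b, ∑ u, ∑ v, F u v a b := by
  have h1 : ∀ u, ∑ v, ∑ a, ∑ b, F u v a b = ∑ a, ∑ b, ∑ v, F u v a b := by
    intro u
    rw [Finset.sum_comm (f := fun v a => ∑ b, F u v a b)]
    exact Finset.sum_congr rfl fun a _ => Finset.sum_comm
  calc ∑ u, ∑ v, ∑ a, ∑ b, F u v a b = ∑ u, ∑ a, ∑ b, ∑ v, F u v a b :=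
        Finset.sum_congr rfl fun u _ => h1 u
    _ = ∑ a, ∑ u, ∑ b, ∑ v, F u v a b := Finset.sum_comm
    _ = ∑ a, ∑ b, ∑ u, ∑ v, F u v a b :=
        Finset.sum_congr rfl fun a _ => Finset.sum_comm

lemma psd_quad {VG : Type*} [Fintype VG] [DecidableEq VG] (X : Matrix VG VG ℝ)
    (hX : X.PosSemidef) (y : VG → ℝ) :
    0 ≤ ∑ a, ∑ b, y a * y b * X a b ^ 2 := by
  obtain ⟨m, B, hB⟩ := Matrix.posSemidef_iff_eq_sum_vecMulVec.mp hX
  have hXe : ∀ a b, X a b = ∑ k, B k a * B k b := by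
    intro a b
    simp [hB, Matrix.sum_apply, Matrix.vecMulVec_apply]
  have key : ∑ a, ∑ b, y a * y b * X a b ^ 2
      = ∑ k, ∑ l, (∑ a, y a * B k a * B l a) ^ 2 := by
    have step1 : ∑ a, ∑ b, y a * y b * X a b ^ 2
        = ∑ a, ∑ b, ∑ k, ∑ l, (y a * B k a * B l a) * (y b * B k b * B l b) := by
      refine Finset.sum_congr rfl fun a _ => Finset.sum_congr rfl fun b _ => ?_
      rw [hXe a b, pow_two, Finset.sum_mul_sum, Finset.mul_sum]
      refine Finset.sum_congr rfl fun k _ => ?_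
      rw [Finset.mul_sum]
      exact Finset.sum_congr rfl fun l _ => by ring
    rw [step1, swap4 (fun a b k l => (y a * B k a * B l a) * (y b * B k b * B l b))]
    refine Finset.sum_congr rfl fun k _ => Finset.sum_congr rfl fun l _ => ?_
    rw [pow_two, Finset.sum_mul_sum]
  rw [key]
  exact Finset.sum_nonneg fun k _ => Finset.sum_nonneg fun l _ => sq_nonneg _

lemma rayleigh_bounds (A : Matrix W W ℝ) (hA : A.IsHermitian) (x : W → ℝ) :
    (⨅ i, hA.eigenvalues i) * (∑ u, x u * x u) ≤ ∑ u, ∑ v, x u * (A u v * x v) ∧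
      ∑ u, ∑ v, x u * (A u v * x v) ≤ (⨆ i, hA.eigenvalues i) * (∑ u, x u * x u) := by
  classical
  set b := hA.eigenvectorBasis with hb
  set B : W → W → ℝ := fun i => (WithLp.equiv 2 (W → ℝ)) (b i) with hB
  have hBe : ∀ i, A *ᵥ B i = hA.eigenvalues i • B i := fun i => hA.mulVec_eigenvectorBasis i
  set x' : EuclideanSpace ℝ W := WithLp.toLp 2 x with hx'
  have hconv : ∀ y z : EuclideanSpace ℝ W, (inner ℝ y z : ℝ) =
      ∑ u, ((WithLp.equiv 2 (W → ℝ)) y) u * ((WithLp.equiv 2 (W → ℝ)) z) u := by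
    intro y z
    simp [PiLp.inner_apply, RCLike.inner_apply, mul_comm]
  set c : W → ℝ := fun i => ∑ u, B i u * x u with hc
  have hsymm : ∀ u v, A u v = A v u := by
    intro u v
    have h2 : Aᵀ = A := by
      have := hA
      rwa [Matrix.IsHermitian, Matrix.conjTranspose_eq_transpose_of_trivial] at this
    conv_rhs => rw [← h2]
    rfl
  have hBx : ∀ i, ∑ u, ((WithLp.equiv 2 (W → ℝ)) x') u * B i u = c i := by
    intro i
    simp only [hc]
    exact Finset.sum_congr rfl fun u _ => by rw [mul_comm]; rfl
  have hAx : ∀ i, ∑ u, B i u * ((WithLp.equiv 2 (W → ℝ)) (WithLp.toLp 2 (A *ᵥ x) : EuclideanSpace ℝ W)) u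
      = hA.eigenvalues i * c i := by
    intro i
    have h3 : ∀ u, ((WithLp.equiv 2 (W → ℝ)) (WithLp.toLp 2 (A *ᵥ x) : EuclideanSpace ℝ W)) u
        = ∑ v, A u v * x v := fun u => rfl
    have h4 : ∀ v, (∑ u, A v u * B i u) = hA.eigenvalues i * B i v := by
      intro v
      have := congrFun (hBe i) v
      rw [Matrix.mulVec, dotProduct] at this
      rw [this]; rfl
    calc ∑ u, B i u * ((WithLp.equiv 2 (W → ℝ)) (WithLp.toLp 2 (A *ᵥ x) : EuclideanSpace ℝ W)) u
        = ∑ u, ∑ v, B i u * (A u v * x v) := by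
          refine Finset.sum_congr rfl fun u _ => ?_
          rw [h3, Finset.mul_sum]
      _ = ∑ v, (∑ u, A v u * B i u) * x v := by
          rw [Finset.sum_comm]
          refine Finset.sum_congr rfl fun v _ => ?_
          rw [Finset.sum_mul]
          refine Finset.sum_congr rfl fun u _ => ?_
          rw [hsymm v u]; ring
      _ = ∑ v, hA.eigenvalues i * B i v * x v := by
          refine Finset.sum_congr rfl fun v _ => ?_
          rw [h4]
      _ = hA.eigenvalues i * c i := by
          rw [hc]; simp only [Finset.mul_sum]
          exact Finset.sum_congr rfl fun v _ => by ring
  have key : ∑ u, ∑ v, x u * (A u v * x v) = ∑ i, hA.eigenvalues i * (c i) ^ 2 := by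
    have h1 := b.sum_inner_mul_inner x' (WithLp.toLp 2 (A *ᵥ x) : EuclideanSpace ℝ W)
    simp only [hconv] at h1
    have hL : ∑ u, ((WithLp.equiv 2 (W → ℝ)) x') u *
        ((WithLp.equiv 2 (W → ℝ)) (WithLp.toLp 2 (A *ᵥ x) : EuclideanSpace ℝ W)) u
        = ∑ u, ∑ v, x u * (A u v * x v) := by
      refine Finset.sum_congr rfl fun u _ => ?_
      show x u * (∑ v, A u v * x v) = _
      rw [Finset.mul_sum]
    rw [hL] at h1
    rw [← h1]
    refine Finset.sum_congr rfl fun i _ => ?_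
    rw [hBx i, hAx i]
    ring
  have keyx : ∑ u, x u * x u = ∑ i, (c i) ^ 2 := by
    have h1 := b.sum_inner_mul_inner x' x'
    simp only [hconv] at h1
    have hL : ∑ u, ((WithLp.equiv 2 (W → ℝ)) x') u * ((WithLp.equiv 2 (W → ℝ)) x') u
        = ∑ u, x u * x u := rfl
    rw [hL] at h1
    rw [← h1]
    refine Finset.sum_congr rfl fun i _ => ?_
    have h5 : ∑ u, B i u * ((WithLp.equiv 2 (W → ℝ)) x') u = c i := by
      rw [← hBx i]
      exact Finset.sum_congr rfl fun u _ => by rw [mul_comm]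
    rw [hBx i, h5]
    ring
  have hbdd : BddAbove (Set.range hA.eigenvalues) := Set.Finite.bddAbove (Set.finite_range _)
  have hbddb : BddBelow (Set.range hA.eigenvalues) := Set.Finite.bddBelow (Set.finite_range _)
  constructor
  · rw [key, keyx, Finset.mul_sum]
    exact Finset.sum_le_sum fun i _ =>
      mul_le_mul_of_nonneg_right (ciInf_le hbddb i) (sq_nonneg _)
  · rw [key, keyx, Finset.mul_sum]
    exact Finset.sum_le_sum fun i _ =>
      mul_le_mul_of_nonneg_right (le_ciSup hbdd i) (sq_nonneg _)

lemma exists_min_eigvec [Nonempty W] (A : Matrix W W ℝ) (hA : A.IsHermitian) :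
    ∃ w : W → ℝ, (∑ u, w u * w u = 1) ∧
      (∀ u, ∑ v, A u v * w v = (⨅ i, hA.eigenvalues i) * w u) := by
  classical
  obtain ⟨i₀, hi₀⟩ := Finite.exists_min hA.eigenvalues
  have hmin : (⨅ i, hA.eigenvalues i) = hA.eigenvalues i₀ :=
    le_antisymm (ciInf_le (Set.Finite.bddBelow (Set.finite_range _)) i₀) (le_ciInf hi₀)
  set b := hA.eigenvectorBasis with hb
  refine ⟨(WithLp.equiv 2 (W → ℝ)) (b i₀), ?_, ?_⟩
  · have h1 : (inner ℝ (b i₀) (b i₀) : ℝ) = 1 := by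
      rw [real_inner_self_eq_norm_sq, b.orthonormal.1 i₀]; norm_num
    rw [← h1]
    simp only [PiLp.inner_apply, RCLike.inner_apply, conj_trivial, WithLp.equiv_apply]
  · intro u
    have h2 := congrFun (hA.mulVec_eigenvectorBasis i₀) u
    rw [Matrix.mulVec, dotProduct] at h2
    rw [hmin]
    exact h2

end SpectralFracAux


set_option maxHeartbeats 1600000 in
/-- **Lemma (main lemma).** If `H` is vertex- and edge-transitive with at least one edge, `G` has
an `H`-partition (given by `P : V(G) → V(H)`, with `V_u = P⁻¹(u)`), and `X` is a real symmetric
PSD matrix indexed by `V(G)`, then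
`‖X‖² ≤ (1 + λ_max(H)/|λ_min(H)|) · Σ_{(u,v) : {u,v} ∉ E(H)} ‖X_[u,v]‖²`. -/
theorem SpectralFrac.frobenius_le_nonedge_blocks {VG W : Type*} [Fintype VG]
    [Fintype W] [DecidableEq W]
    (H : SimpleGraph W) [DecidableRel H.Adj] (G : SimpleGraph VG)
    (hHe : H.edgeSet.Nonempty) (hvt : IsVertexTransitive H) (het : IsEdgeTransitive H)
    (P : VG → W) (X : Matrix VG VG ℝ) (hX : X.PosSemidef) :
    ∑ a, ∑ b, (X a b) ^ 2 ≤
      (1 + lamMax H / |lamMin H|) *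
        ∑ u, ∑ v, if H.Adj u v then 0
          else ∑ a, ∑ b, if P a = u ∧ P b = v then (X a b) ^ 2 else 0 := by
  classical
  open SpectralFracAux in
  -- extract an edge
  obtain ⟨u₀, v₀, hadj₀⟩ : ∃ u v : W, H.Adj u v := by
    obtain ⟨e, he⟩ := hHe
    induction e using Sym2.ind with
    | _ u v => exact ⟨u, v, he⟩
  haveI : Nonempty W := ⟨u₀⟩
  set A : Matrix W W ℝ := H.adjMatrix ℝ with hAdef
  have hne₀ : u₀ ≠ v₀ := H.ne_of_adj hadj₀
  have hAapp : ∀ u v, A u v = if H.Adj u v then 1 else 0 := by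
    intro u v
    rw [hAdef]
    simp [SimpleGraph.adjMatrix_apply]
  have hAnn : ∀ u v, 0 ≤ A u v := by
    intro u v; rw [hAapp]; split <;> norm_num
  have hA1 : A u₀ v₀ = 1 := by rw [hAapp]; simp [hadj₀]
  set n : ℝ := (Fintype.card W : ℝ) with hn
  have hnpos : 0 < n := by
    rw [hn]; exact_mod_cast Fintype.card_pos
  set m2 : ℝ := ∑ u, ∑ v, A u v with hm2
  have hm2pos : 0 < m2 := by
    have h2 : A u₀ v₀ ≤ ∑ v, A u₀ v :=
      Finset.single_le_sum (fun v _ => hAnn u₀ v) (Finset.mem_univ v₀)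
    have h3 : ∑ v, A u₀ v ≤ m2 := by
      rw [hm2]
      exact Finset.single_le_sum
        (fun u _ => Finset.sum_nonneg fun v _ => hAnn u v) (Finset.mem_univ u₀)
    rw [hA1] at h2
    linarith
  -- Rayleigh: average degree bound
  have hm2max : m2 ≤ lamMax H * n := by
    have hray := (rayleigh_bounds A (adjMatrix_isHermitian H) (fun _ => 1)).2
    have h1 : ∑ u, ∑ v, (1:ℝ) * (A u v * 1) = m2 := by
      rw [hm2]
      exact Finset.sum_congr rfl fun u _ => Finset.sum_congr rfl fun v _ => by ring
    have h2 : ∑ _u : W, (1:ℝ) * 1 = n := by simp [hn]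
    rw [h1, h2] at hray
    exact hray
  -- Rayleigh: lamMin ≤ -1 < 0
  have hlm_neg : lamMin H < 0 := by
    set x₂ : W → ℝ := fun u => (if u = u₀ then (1:ℝ) else 0) - (if u = v₀ then 1 else 0)
      with hx₂
    have hray := (rayleigh_bounds A (adjMatrix_isHermitian H) x₂).1
    have hs1 : ∑ u, x₂ u * x₂ u = 2 := by
      simp only [hx₂, sub_mul, mul_sub, mul_ite, ite_mul, one_mul, mul_one, zero_mul,
        mul_zero, Finset.sum_sub_distrib]
      simp [Finset.sum_ite_eq', hne₀, Ne.symm hne₀]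
      norm_num
    have hs2 : ∑ u, ∑ v, x₂ u * (A u v * x₂ v) = -2 := by
      have hinner : ∀ u, ∑ v, A u v * x₂ v = A u u₀ - A u v₀ := by
        intro u
        simp only [hx₂, mul_sub, mul_ite, mul_one, mul_zero, Finset.sum_sub_distrib]
        simp [Finset.sum_ite_eq']
      have houter : ∀ u, ∑ v, x₂ u * (A u v * x₂ v) = x₂ u * (A u u₀ - A u v₀) := by
        intro u
        rw [← Finset.mul_sum, hinner u]
      rw [Finset.sum_congr rfl fun u _ => houter u]
      simp only [hx₂, sub_mul, ite_mul, one_mul, zero_mul, Finset.sum_sub_distrib]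
      rw [Fintype.sum_ite_eq' u₀ (fun u => A u u₀ - A u v₀),
        Fintype.sum_ite_eq' v₀ (fun u => A u u₀ - A u v₀)]
      have e1 : A u₀ u₀ = 0 := by rw [hAapp]; simp
      have e2 : A v₀ v₀ = 0 := by rw [hAapp]; simp
      have e3 : A v₀ u₀ = 1 := by rw [hAapp]; simp [hadj₀.symm]
      rw [e1, e2, e3, hA1]; ring
    rw [hs1] at hray
    have : lamMin H * 2 ≤ -2 := le_trans hray (le_of_eq hs2)
    linarith
  -- minimal eigenvector
  obtain ⟨w, hwn, hwe⟩ := exists_min_eigvec A (adjMatrix_isHermitian H)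
  have hwe' : ∀ u, ∑ v, A u v * w v = lamMin H * w u := hwe
  -- the automorphism set
  have hidT : Equiv.refl W ∈ autSet H := by
    simp [SpectralFrac.autSet]
  set N : ℝ := ((autSet H).card : ℝ) with hN
  have hNpos : 0 < N := by
    rw [hN]
    exact_mod_cast Finset.card_pos.mpr ⟨_, hidT⟩
  have hmemT : ∀ π ∈ autSet H, ∀ u v, H.Adj (π u) (π v) ↔ H.Adj u v := by
    intro π hπ
    simpa [SpectralFrac.autSet] using hπ
  have hcomp : ∀ (σ : H ≃g H), ∀ π ∈ autSet H, σ.toEquiv.trans π ∈ autSet H := by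
    intro σ π hπ
    simp only [SpectralFrac.autSet, Finset.mem_filter, Finset.mem_univ, true_and]
    intro u v
    exact (hmemT π hπ (σ u) (σ v)).trans σ.map_adj_iff
  -- the averaged rank-one "matrix" e
  set e : W → W → ℝ := fun u v => ∑ π ∈ autSet H, w (π u) * w (π v) with he
  have hE1 : ∀ (σ : H ≃g H) (u v : W), e (σ u) (σ v) = e u v := by
    intro σ u v
    rw [he]
    refine Finset.sum_nbij' (i := fun π => σ.toEquiv.trans π)
      (j := fun ρ => σ.toEquiv.symm.trans ρ) (hcomp σ) ?_ ?_ ?_ ?_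
    · intro ρ hρ
      exact hcomp σ.symm ρ hρ
    · intro π _
      ext z
      simp only [Equiv.trans_apply]
      exact congrArg π (σ.toEquiv.apply_symm_apply z)
    · intro ρ _
      ext z
      simp only [Equiv.trans_apply]
      exact congrArg ρ (σ.toEquiv.symm_apply_apply z)
    · intro π _
      rfl
  have hesymm : ∀ u v, e u v = e v u := by
    intro u v
    exact Finset.sum_congr rfl fun π _ => mul_comm _ _
  have hconst : ∀ u v, e u u = e v v := by
    intro u v
    obtain ⟨σ, hσ⟩ := hvt u v
    rw [← hσ]
    exact (hE1 σ u u).symm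
  have hα_nonneg : 0 ≤ e u₀ u₀ := Finset.sum_nonneg fun π _ => mul_self_nonneg _
  have hαn : n * e u₀ u₀ = N := by
    have h1 : ∑ u, e u u = N := by
      rw [he]
      dsimp only
      rw [Finset.sum_comm]
      have h2 : ∀ π ∈ autSet H, ∑ u, w (π u) * w (π u) = 1 := by
        intro π _
        rw [Equiv.sum_comp π (fun z => w z * w z)]
        exact hwn
      rw [Finset.sum_congr rfl h2, Finset.sum_const, hN]
      simp
    have h2 : ∑ u, e u u = ∑ _u : W, e u₀ u₀ :=
      Finset.sum_congr rfl fun u _ => hconst u u₀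
    rw [h2, Finset.sum_const] at h1
    rw [← h1, hn]
    simp [mul_comm]
  have hedgeE : ∀ u v, H.Adj u v → e u v = e u₀ v₀ := by
    intro u v huv
    obtain ⟨σ, hσ⟩ := het huv hadj₀
    rw [Sym2.eq_iff] at hσ
    rcases hσ with ⟨h1, h2⟩ | ⟨h1, h2⟩
    · rw [← hE1 σ u v, h1, h2]
    · rw [← hE1 σ u v, h1, h2, hesymm]
  have hbnd : ∀ u v, e u v ≤ e u₀ u₀ := by
    intro u v
    have hcs := Finset.sum_mul_sq_le_sq_mul_sq (autSet H)
      (fun π => w (π u)) (fun π => w (π v))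
    have h1 : ∑ π ∈ autSet H, w (π u) ^ 2 = e u u := by
      rw [he]
      exact Finset.sum_congr rfl fun π _ => by rw [pow_two]
    have h2 : ∑ π ∈ autSet H, w (π v) ^ 2 = e v v := by
      rw [he]
      exact Finset.sum_congr rfl fun π _ => by rw [pow_two]
    rw [h1, h2, hconst u u₀, hconst v u₀] at hcs
    have h3 : e u v = ∑ π ∈ autSet H, w (π u) * w (π v) := rfl
    calc e u v ≤ |e u v| := le_abs_self _
      _ = Real.sqrt ((e u v) ^ 2) := (Real.sqrt_sq_eq_abs _).symm
      _ ≤ Real.sqrt (e u₀ u₀ * e u₀ u₀) := by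
          apply Real.sqrt_le_sqrt
          rw [h3]
          exact hcs
      _ = e u₀ u₀ := by
          rw [← pow_two]
          exact Real.sqrt_sq hα_nonneg
  -- eigen-identity for e
  have heig : ∑ u, ∑ v, A u v * e u v = lamMin H * N := by
    have step1 : ∑ u, ∑ v, A u v * e u v
        = ∑ π ∈ autSet H, ∑ u, ∑ v, A u v * (w (π u) * w (π v)) := by
      have h1 : ∀ u, ∑ v, A u v * e u v
          = ∑ π ∈ autSet H, ∑ v, A u v * (w (π u) * w (π v)) := by
        intro u
        rw [Finset.sum_comm]
        refine Finset.sum_congr rfl fun v _ => ?_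
        rw [he]
        dsimp only
        rw [Finset.mul_sum]
      rw [Finset.sum_congr rfl fun u _ => h1 u, Finset.sum_comm]
    have step2 : ∀ π ∈ autSet H, ∑ u, ∑ v, A u v * (w (π u) * w (π v)) = lamMin H := by
      intro π hπ
      have hAp : ∀ u v, A u v = A (π u) (π v) := by
        intro u v
        rw [hAapp, hAapp]
        simp [hmemT π hπ u v]
      have hin : ∀ u, ∑ v, A u v * (w (π u) * w (π v)) = w (π u) * (lamMin H * w (π u)) := by
        intro u
        have h4 : ∑ v, A u v * (w (π u) * w (π v))
            = w (π u) * ∑ v, A (π u) (π v) * w (π v) := by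
          rw [Finset.mul_sum]
          refine Finset.sum_congr rfl fun v _ => ?_
          rw [hAp u v]; ring
        rw [h4, Equiv.sum_comp π (fun z => A (π u) z * w z), hwe' (π u)]
      rw [Finset.sum_congr rfl fun u _ => hin u]
      have h5 : ∑ u, w (π u) * (lamMin H * w (π u)) = lamMin H * ∑ u, w (π u) * w (π u) := by
        rw [Finset.mul_sum]
        exact Finset.sum_congr rfl fun u _ => by ring
      rw [h5, Equiv.sum_comp π (fun z => w z * w z), hwn, mul_one]
    rw [step1, Finset.sum_congr rfl step2, Finset.sum_const, hN]
    simp [mul_comm]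
  have heig2 : ∑ u, ∑ v, A u v * e u v = e u₀ v₀ * m2 := by
    rw [hm2, Finset.mul_sum]
    refine Finset.sum_congr rfl fun u _ => ?_
    rw [Finset.mul_sum]
    refine Finset.sum_congr rfl fun v _ => ?_
    by_cases h : H.Adj u v
    · rw [hedgeE u v h]; ring
    · have : A u v = 0 := by rw [hAapp]; simp [h]
      rw [this]; ring
  have hc_m2 : e u₀ v₀ * m2 = lamMin H * N := by rw [← heig2, heig]
  -- the block-sum matrix Q
  set Q : W → W → ℝ := fun u v => ∑ a, ∑ b, if P a = u ∧ P b = v then X a b ^ 2 else 0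
    with hQ
  have hQnn : ∀ u v, 0 ≤ Q u v := by
    intro u v
    refine Finset.sum_nonneg fun a _ => Finset.sum_nonneg fun b _ => ?_
    split
    · positivity
    · rfl
  have collapse : ∀ (g : W → W → ℝ) (a b : VG),
      (∑ u, ∑ v, if P a = u ∧ P b = v then g u v else 0) = g (P a) (P b) := by
    intro g a b
    have h1 : ∀ u, (∑ v, if P a = u ∧ P b = v then g u v else 0)
        = if P a = u then g u (P b) else 0 := by
      intro u
      by_cases h : P a = u
      · simp only [h, true_and]
        exact Fintype.sum_ite_eq (P b) (g u)
      · simp [h]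
    rw [Finset.sum_congr rfl fun u _ => h1 u]
    exact Fintype.sum_ite_eq (P a) (fun u => g u (P b))
  have hQtot : ∑ u, ∑ v, Q u v = ∑ a, ∑ b, X a b ^ 2 := by
    rw [hQ]
    dsimp only
    rw [swap4 (fun u v a b => if P a = u ∧ P b = v then X a b ^ 2 else 0)]
    exact Finset.sum_congr rfl fun a _ => Finset.sum_congr rfl fun b _ =>
      collapse (fun _ _ => X a b ^ 2) a b
  -- positivity of the e-weighted Q-sum
  have hposE : 0 ≤ ∑ u, ∑ v, e u v * Q u v := by
    have hstep : ∑ u, ∑ v, e u v * Q u v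
        = ∑ π ∈ autSet H, ∑ u, ∑ v, (w (π u) * w (π v)) * Q u v := by
      have h1 : ∀ u, ∑ v, e u v * Q u v
          = ∑ π ∈ autSet H, ∑ v, (w (π u) * w (π v)) * Q u v := by
        intro u
        rw [Finset.sum_comm]
        refine Finset.sum_congr rfl fun v _ => ?_
        rw [he]
        dsimp only
        rw [Finset.sum_mul]
      rw [Finset.sum_congr rfl fun u _ => h1 u, Finset.sum_comm]
    rw [hstep]
    refine Finset.sum_nonneg fun π _ => ?_
    have h2 : ∑ u, ∑ v, (w (π u) * w (π v)) * Q u v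
        = ∑ a, ∑ b, w (π (P a)) * w (π (P b)) * X a b ^ 2 := by
      have h3 : ∀ u v, (w (π u) * w (π v)) * Q u v
          = ∑ a, ∑ b, if P a = u ∧ P b = v then w (π u) * w (π v) * X a b ^ 2 else 0 := by
        intro u v
        rw [hQ]
        dsimp only
        rw [Finset.mul_sum]
        refine Finset.sum_congr rfl fun a _ => ?_
        rw [Finset.mul_sum]
        refine Finset.sum_congr rfl fun b _ => ?_
        rw [mul_ite, mul_zero]
      rw [Finset.sum_congr rfl fun u _ => Finset.sum_congr rfl fun v _ => h3 u v]
      rw [swap4 (fun u v a b => if P a = u ∧ P b = v then w (π u) * w (π v) * X a b ^ 2 else 0)]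
      exact Finset.sum_congr rfl fun a _ => Finset.sum_congr rfl fun b _ =>
        collapse (fun u v => w (π u) * w (π v) * X a b ^ 2) a b
    rw [h2]
    exact psd_quad X hX (fun a => w (π (P a)))
  -- split into edge and non-edge parts
  set Se : ℝ := ∑ u, ∑ v, if H.Adj u v then Q u v else 0 with hSe
  set Sg : ℝ := ∑ u, ∑ v, if H.Adj u v then 0 else Q u v with hSg
  have hSg_nn : 0 ≤ Sg := by
    rw [hSg]
    refine Finset.sum_nonneg fun u _ => Finset.sum_nonneg fun v _ => ?_
    split
    · rfl
    · exact hQnn u v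
  have hsplitQ : ∑ u, ∑ v, Q u v = Se + Sg := by
    rw [hSe, hSg, ← Finset.sum_add_distrib]
    refine Finset.sum_congr rfl fun u _ => ?_
    rw [← Finset.sum_add_distrib]
    refine Finset.sum_congr rfl fun v _ => ?_
    by_cases h : H.Adj u v <;> simp [h]
  have hEQbound : 0 ≤ e u₀ v₀ * Se + e u₀ u₀ * Sg := by
    refine le_trans hposE ?_
    have hle : ∑ u, ∑ v, e u v * Q u v
        ≤ ∑ u, ∑ v, (if H.Adj u v then e u₀ v₀ * Q u v else e u₀ u₀ * Q u v) := by
      refine Finset.sum_le_sum fun u _ => Finset.sum_le_sum fun v _ => ?_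
      by_cases h : H.Adj u v
      · rw [if_pos h, hedgeE u v h]
      · rw [if_neg h]
        exact mul_le_mul_of_nonneg_right (hbnd u v) (hQnn u v)
    refine le_trans hle (le_of_eq ?_)
    have hid : ∀ u v, (if H.Adj u v then e u₀ v₀ * Q u v else e u₀ u₀ * Q u v)
        = e u₀ v₀ * (if H.Adj u v then Q u v else 0)
          + e u₀ u₀ * (if H.Adj u v then 0 else Q u v) := by
      intro u v
      by_cases h : H.Adj u v <;> simp [h]
    rw [Finset.sum_congr rfl fun u _ => Finset.sum_congr rfl fun v _ => hid u v]
    simp only [Finset.sum_add_distrib, ← Finset.mul_sum]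
    rfl
  -- final arithmetic
  have k0 : 0 ≤ N * (lamMin H * n * Se + m2 * Sg) := by
    have h1 : 0 ≤ (e u₀ v₀ * Se + e u₀ u₀ * Sg) * (m2 * n) :=
      mul_nonneg hEQbound (by positivity)
    have keq : (e u₀ v₀ * Se + e u₀ u₀ * Sg) * (m2 * n)
        = N * (lamMin H * n * Se + m2 * Sg) := by
      linear_combination (n * Se) * hc_m2 + (m2 * Sg) * hαn
    linarith [keq ▸ h1]
  have k1 : 0 ≤ lamMin H * n * Se + m2 * Sg := by
    have := le_of_mul_le_mul_left (by linarith : N * 0 ≤ N * (lamMin H * n * Se + m2 * Sg))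
      hNpos
    linarith
  have k3 : m2 * Sg ≤ lamMax H * n * Sg := by
    have := mul_le_mul_of_nonneg_right hm2max hSg_nn
    linarith
  have k4 : n * ((- lamMin H) * Se) ≤ n * (lamMax H * Sg) := by nlinarith [k1, k3]
  have k5 : (- lamMin H) * Se ≤ lamMax H * Sg := le_of_mul_le_mul_left k4 hnpos
  have hlmpos : 0 < - lamMin H := by linarith
  have k6 : Se ≤ lamMax H / (- lamMin H) * Sg := by
    rw [div_mul_eq_mul_div, le_div_iff₀ hlmpos]
    nlinarith [k5]
  have habs : |lamMin H| = - lamMin H := abs_of_neg hlm_neg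
  have hgoalRHS : (∑ u, ∑ v, if H.Adj u v then (0:ℝ)
      else ∑ a, ∑ b, if P a = u ∧ P b = v then X a b ^ 2 else 0) = Sg := by
    rw [hSg]
  calc ∑ a, ∑ b, X a b ^ 2 = Se + Sg := by rw [← hQtot, hsplitQ]
    _ ≤ (1 + lamMax H / (- lamMin H)) * Sg := by nlinarith [k6, hSg_nn]
    _ = (1 + lamMax H / |lamMin H|) * Sg := by rw [habs]
    _ = (1 + lamMax H / |lamMin H|) *
        ∑ u, ∑ v, if H.Adj u v then 0
          else ∑ a, ∑ b, if P a = u ∧ P b = v then X a b ^ 2 else 0 := by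
      rw [hgoalRHS]
end

section
/- Let H be a finite simple graph, with at least one edge, that is both vertex-transitive and edge-transitive, let G be a finite simple graph equipped with an H-partition ⨆_{u ∈ V(H)} V_u, and let X, Y be real symmetric positive semidefinite matrices with rows and columns indexed by V(G). If XY = 0 and X_[u,v] = Y_[u,v] for every ordered pair (u,v) of vertices of H with {u,v} ∉ E(H) (including u = v), then ‖X‖² ≤ (λ_max(H)/|λ_min(H)|) · ‖Y‖². -/
open Matrix Finset

/-! ### Auxiliary material for the proof -/

section SumJuggling

variable {n m : Type*} [Fintype n] [Fintype m]

private lemma sum4_comm' (f : n → n → m → m → ℝ) :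
    ∑ a, ∑ b, ∑ i, ∑ j, f a b i j = ∑ i, ∑ j, ∑ a, ∑ b, f a b i j :=
  calc ∑ a, ∑ b, ∑ i, ∑ j, f a b i j
      = ∑ a, ∑ i, ∑ b, ∑ j, f a b i j :=
        Finset.sum_congr rfl fun _ _ => Finset.sum_comm
    _ = ∑ i, ∑ a, ∑ b, ∑ j, f a b i j := Finset.sum_comm
    _ = ∑ i, ∑ a, ∑ j, ∑ b, f a b i j :=
        Finset.sum_congr rfl fun _ _ => Finset.sum_congr rfl fun _ _ => Finset.sum_comm
    _ = ∑ i, ∑ j, ∑ a, ∑ b, f a b i j :=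
        Finset.sum_congr rfl fun _ _ => Finset.sum_comm

private lemma sum3_comm' {s : Finset m} (f : n → n → m → ℝ) :
    ∑ a, ∑ b, ∑ i ∈ s, f a b i = ∑ i ∈ s, ∑ a, ∑ b, f a b i :=
  calc ∑ a, ∑ b, ∑ i ∈ s, f a b i
      = ∑ a, ∑ i ∈ s, ∑ b, f a b i :=
        Finset.sum_congr rfl fun _ _ => Finset.sum_comm
    _ = ∑ i ∈ s, ∑ a, ∑ b, f a b i := Finset.sum_comm

/-- Quadratic-form positivity for PSD matrices with diagonal scaling. -/
private lemma psd_sum_nonneg' {X : Matrix n n ℝ} (hX : X.PosSemidef)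
    (D : n → ℝ) : 0 ≤ ∑ a, ∑ b, X a b * X a b * (D a * D b) := by
  obtain ⟨B, hB⟩ : ∃ B : Matrix n n ℝ, X = Bᴴ * B := by
    classical
    open scoped MatrixOrder in
    obtain ⟨B, hB⟩ := CStarAlgebra.nonneg_iff_eq_star_mul_self.mp hX.nonneg
    exact ⟨B, hB⟩
  have hXab : ∀ a b, X a b = ∑ i, B i a * B i b := by
    intro a b
    rw [hB]
    simp [Matrix.mul_apply, Matrix.conjTranspose_apply, mul_comm]
  have key : ∑ a, ∑ b, X a b * X a b * (D a * D b)
      = ∑ i, ∑ j, (∑ a, B i a * B j a * D a) ^ 2 := by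
    have e1 : ∑ a, ∑ b, X a b * X a b * (D a * D b)
        = ∑ a, ∑ b, ∑ i, ∑ j, (B i a * B j a * D a) * (B i b * B j b * D b) := by
      refine Finset.sum_congr rfl fun a _ => Finset.sum_congr rfl fun b _ => ?_
      rw [hXab a b, Finset.sum_mul_sum, Finset.sum_mul]
      refine Finset.sum_congr rfl fun i _ => ?_
      rw [Finset.sum_mul]
      refine Finset.sum_congr rfl fun j _ => ?_
      ring
    have e2 : ∑ i, ∑ j, (∑ a, B i a * B j a * D a) ^ 2
        = ∑ i, ∑ j, ∑ a, ∑ b, (B i a * B j a * D a) * (B i b * B j b * D b) := by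
      refine Finset.sum_congr rfl fun i _ => Finset.sum_congr rfl fun j _ => ?_
      rw [sq, Finset.sum_mul_sum]
    rw [e1, e2]
    exact sum4_comm' _
  rw [key]
  positivity

end SumJuggling

section Rayleigh

variable {n : Type*} [Fintype n] [DecidableEq n]

private lemma rayleigh' {A : Matrix n n ℝ} (hA : A.IsHermitian) (v : n → ℝ) :
    (⨅ i, hA.eigenvalues i) * (v ⬝ᵥ v) ≤ v ⬝ᵥ (A *ᵥ v) ∧
      v ⬝ᵥ (A *ᵥ v) ≤ (⨆ i, hA.eigenvalues i) * (v ⬝ᵥ v) := by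
  cases isEmpty_or_nonempty n with
  | inl h =>
    constructor <;> simp [dotProduct]
  | inr h =>
    set U : Matrix n n ℝ := (hA.eigenvectorUnitary : Matrix n n ℝ) with hU
    have hUU : U * Uᵀ = 1 := by
      have := (Matrix.mem_unitaryGroup_iff).mp hA.eigenvectorUnitary.2
      rwa [Matrix.star_eq_conjTranspose, Matrix.conjTranspose_eq_transpose_of_trivial] at this
    have hdiag : A = U * Matrix.diagonal hA.eigenvalues * Uᵀ := by
      have h2 := hA.spectral_theorem
      rw [Unitary.conjStarAlgAut_apply, Matrix.star_eq_conjTranspose,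
        Matrix.conjTranspose_eq_transpose_of_trivial] at h2
      convert h2 using 3
      all_goals rfl
    have hvv : v ⬝ᵥ v = (Uᵀ *ᵥ v) ⬝ᵥ (Uᵀ *ᵥ v) :=
      calc v ⬝ᵥ v = v ⬝ᵥ ((U * Uᵀ) *ᵥ v) := by rw [hUU, Matrix.one_mulVec]
        _ = v ⬝ᵥ (U *ᵥ (Uᵀ *ᵥ v)) := by rw [Matrix.mulVec_mulVec]
        _ = (v ᵥ* U) ⬝ᵥ (Uᵀ *ᵥ v) := Matrix.dotProduct_mulVec _ _ _
        _ = (Uᵀ *ᵥ v) ⬝ᵥ (Uᵀ *ᵥ v) := by rw [← Matrix.mulVec_transpose]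
    have hvAv : v ⬝ᵥ (A *ᵥ v) = ∑ i, hA.eigenvalues i * ((Uᵀ *ᵥ v) i) ^ 2 := by
      conv_lhs => rw [hdiag]
      calc v ⬝ᵥ ((U * Matrix.diagonal hA.eigenvalues * Uᵀ) *ᵥ v)
          = v ⬝ᵥ (U *ᵥ ((Matrix.diagonal hA.eigenvalues) *ᵥ (Uᵀ *ᵥ v))) := by
            rw [Matrix.mulVec_mulVec, Matrix.mulVec_mulVec]
        _ = (v ᵥ* U) ⬝ᵥ ((Matrix.diagonal hA.eigenvalues) *ᵥ (Uᵀ *ᵥ v)) :=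
            Matrix.dotProduct_mulVec _ _ _
        _ = (Uᵀ *ᵥ v) ⬝ᵥ ((Matrix.diagonal hA.eigenvalues) *ᵥ (Uᵀ *ᵥ v)) := by
            rw [← Matrix.mulVec_transpose]
        _ = ∑ i, hA.eigenvalues i * ((Uᵀ *ᵥ v) i) ^ 2 := by
            simp only [dotProduct, Matrix.mulVec_diagonal]
            exact Finset.sum_congr rfl fun i _ => by ring
    have hww : (Uᵀ *ᵥ v) ⬝ᵥ (Uᵀ *ᵥ v) = ∑ i, ((Uᵀ *ᵥ v) i) ^ 2 := by
      simp [dotProduct, sq]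
    constructor
    · rw [hvAv, hvv, hww, Finset.mul_sum]
      refine Finset.sum_le_sum fun i _ => ?_
      exact mul_le_mul_of_nonneg_right (ciInf_le (Finite.bddBelow_range _) i) (sq_nonneg _)
    · rw [hvAv, hvv, hww, Finset.mul_sum]
      refine Finset.sum_le_sum fun i _ => ?_
      exact mul_le_mul_of_nonneg_right (le_ciSup (Finite.bddAbove_range _) i) (sq_nonneg _)

end Rayleigh

namespace SpectralFrac

section AutKernel

variable {W : Type*} [Fintype W] [DecidableEq W] {H : SimpleGraph W} [DecidableRel H.Adj]

lemma mem_autSet_iff {π : Equiv.Perm W} :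
    π ∈ autSet H ↔ ∀ u v, H.Adj (π u) (π v) ↔ H.Adj u v := by
  simp [autSet]

lemma iso_mem_autSet (f : H ≃g H) : (f.toEquiv : Equiv.Perm W) ∈ autSet H :=
  mem_autSet_iff.mpr fun _ _ => f.map_adj_iff

lemma one_mem_autSet : (1 : Equiv.Perm W) ∈ autSet H :=
  mem_autSet_iff.mpr fun _ _ => Iff.rfl

lemma mul_mem_autSet {π σ : Equiv.Perm W} (hπ : π ∈ autSet H) (hσ : σ ∈ autSet H) :
    π * σ ∈ autSet H := by
  rw [mem_autSet_iff] at *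
  intro u v
  rw [Equiv.Perm.mul_apply, Equiv.Perm.mul_apply, hπ, hσ]

lemma inv_mem_autSet {π : Equiv.Perm W} (hπ : π ∈ autSet H) : π⁻¹ ∈ autSet H := by
  rw [mem_autSet_iff] at *
  intro u v
  conv_rhs => rw [← π.apply_symm_apply u, ← π.apply_symm_apply v, hπ]
  rfl

lemma sum_autSet_mul_right {σ : Equiv.Perm W} (hσ : σ ∈ autSet H) (f : Equiv.Perm W → ℝ) :
    ∑ π ∈ autSet H, f (π * σ) = ∑ π ∈ autSet H, f π := by
  refine Finset.sum_equiv (Equiv.mulRight σ) (fun π => ?_) (fun π _ => rfl)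
  constructor
  · intro h; exact mul_mem_autSet h hσ
  · intro h
    have := mul_mem_autSet h (inv_mem_autSet hσ)
    simpa using this

lemma autSet_card_pos : 0 < (autSet H).card :=
  Finset.card_pos.mpr ⟨1, one_mem_autSet⟩

/-- The kernel obtained by symmetrizing `ψ ⊗ ψ` over the automorphism group. -/
noncomputable def Tker (H : SimpleGraph W) [DecidableRel H.Adj] (ψ : W → ℝ) : W → W → ℝ :=
  fun u v => ∑ π ∈ autSet H, ψ (π u) * ψ (π v)

variable {ψ : W → ℝ}

lemma Tker_symm (u v : W) : Tker H ψ u v = Tker H ψ v u :=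
  Finset.sum_congr rfl fun _ _ => mul_comm _ _

lemma Tker_reindex {σ : Equiv.Perm W} (hσ : σ ∈ autSet H) (u v : W) :
    Tker H ψ (σ u) (σ v) = Tker H ψ u v :=
  sum_autSet_mul_right hσ (fun π => ψ (π u) * ψ (π v))

lemma Tker_edge_const (het : IsEdgeTransitive H) {u v x y : W}
    (huv : H.Adj u v) (hxy : H.Adj x y) : Tker H ψ u v = Tker H ψ x y := by
  obtain ⟨f, hf⟩ := het huv hxy
  rw [Sym2.eq_iff] at hf
  have h1 : Tker H ψ u v = Tker H ψ (f u) (f v) :=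
    (Tker_reindex (iso_mem_autSet f) u v).symm
  rcases hf with ⟨h2, h3⟩ | ⟨h2, h3⟩
  · rw [h1, h2, h3]
  · rw [h1, h2, h3, Tker_symm]

lemma Tker_diag_const (hvt : IsVertexTransitive H) (u v : W) :
    Tker H ψ u u = Tker H ψ v v := by
  obtain ⟨f, hf⟩ := hvt u v
  rw [← hf]
  exact (Tker_reindex (iso_mem_autSet f) u u).symm

lemma Tker_diag_val [Nonempty W] (hvt : IsVertexTransitive H)
    (hψ : ∑ u, ψ u * ψ u = 1) (u : W) :
    Tker H ψ u u = ((autSet H).card : ℝ) / (Fintype.card W : ℝ) := by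
  have hsum : ∑ w, Tker H ψ w w = ((autSet H).card : ℝ) := by
    rw [show ∑ w, Tker H ψ w w = ∑ π ∈ autSet H, ∑ w, ψ (π w) * ψ (π w) from Finset.sum_comm]
    rw [Finset.sum_congr rfl fun π _ => (Equiv.sum_comp π fun w => ψ w * ψ w).trans hψ]
    simp
  have hconst : ∑ w, Tker H ψ w w = (Fintype.card W : ℝ) * Tker H ψ u u := by
    rw [Finset.sum_congr rfl fun w _ => Tker_diag_const hvt w u]
    simp [Finset.sum_const, nsmul_eq_mul, Finset.card_univ]
  have hn : (0:ℝ) < (Fintype.card W : ℝ) := by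
    exact_mod_cast Fintype.card_pos
  field_simp
  rw [← hsum, hconst]
  ring

lemma Tker_le [Nonempty W] (hvt : IsVertexTransitive H) (hψ : ∑ u, ψ u * ψ u = 1) (u v : W) :
    Tker H ψ u v ≤ ((autSet H).card : ℝ) / (Fintype.card W : ℝ) := by
  have h1 : Tker H ψ u v ≤ (Tker H ψ u u + Tker H ψ v v) / 2 := by
    unfold Tker
    rw [← Finset.sum_add_distrib, Finset.sum_div]
    exact Finset.sum_le_sum fun π _ => by nlinarith [sq_nonneg (ψ (π u) - ψ (π v))]
  rw [Tker_diag_val hvt hψ u, Tker_diag_val hvt hψ v] at h1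
  calc Tker H ψ u v ≤ _ := h1
    _ = ((autSet H).card : ℝ) / (Fintype.card W : ℝ) := by ring

lemma Tker_edge_sum {lam : ℝ} (hψeig : H.adjMatrix ℝ *ᵥ ψ = lam • ψ)
    (hψ : ∑ u, ψ u * ψ u = 1) :
    ∑ u, ∑ v, (H.adjMatrix ℝ) u v * Tker H ψ u v = ((autSet H).card : ℝ) * lam := by
  have perpi : ∀ π ∈ autSet H,
      ∑ u, ∑ v, (H.adjMatrix ℝ) u v * (ψ (π u) * ψ (π v)) = lam := by
    intro π hπ
    have hAuv : ∀ u v, (H.adjMatrix ℝ) u v = (H.adjMatrix ℝ) (π u) (π v) := by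
      intro u v
      simp only [SimpleGraph.adjMatrix_apply]
      by_cases h : H.Adj u v
      · rw [if_pos h, if_pos ((mem_autSet_iff.mp hπ u v).mpr h)]
      · rw [if_neg h, if_neg (fun hc => h ((mem_autSet_iff.mp hπ u v).mp hc))]
    calc ∑ u, ∑ v, (H.adjMatrix ℝ) u v * (ψ (π u) * ψ (π v))
        = ∑ u, ∑ v, (H.adjMatrix ℝ) (π u) (π v) * (ψ (π u) * ψ (π v)) := by
          exact Finset.sum_congr rfl fun u _ => Finset.sum_congr rfl fun v _ => by
            rw [← hAuv]
      _ = ∑ u, ∑ v, (H.adjMatrix ℝ) u v * (ψ u * ψ v) := by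
          rw [← Equiv.sum_comp π (fun u => ∑ v, (H.adjMatrix ℝ) u v * (ψ u * ψ v))]
          exact Finset.sum_congr rfl fun u _ =>
            Equiv.sum_comp π (fun v => (H.adjMatrix ℝ) (π u) v * (ψ (π u) * ψ v))
      _ = ∑ u, ψ u * (H.adjMatrix ℝ *ᵥ ψ) u := by
          refine Finset.sum_congr rfl fun u _ => ?_
          simp only [Matrix.mulVec, dotProduct]
          rw [Finset.mul_sum]
          exact Finset.sum_congr rfl fun v _ => by ring
      _ = lam := by
          rw [hψeig]
          simp only [Pi.smul_apply, smul_eq_mul]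
          rw [show ∑ u, ψ u * (lam * ψ u) = lam * ∑ u, ψ u * ψ u from by
            rw [Finset.mul_sum]; exact Finset.sum_congr rfl fun u _ => by ring]
          rw [hψ, mul_one]
  calc ∑ u, ∑ v, (H.adjMatrix ℝ) u v * Tker H ψ u v
      = ∑ u, ∑ v, ∑ π ∈ autSet H, (H.adjMatrix ℝ) u v * (ψ (π u) * ψ (π v)) :=
        Finset.sum_congr rfl fun u _ => Finset.sum_congr rfl fun v _ => Finset.mul_sum _ _ _
    _ = ∑ π ∈ autSet H, ∑ u, ∑ v, (H.adjMatrix ℝ) u v * (ψ (π u) * ψ (π v)) := by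
        calc ∑ u, ∑ v, ∑ π ∈ autSet H, (H.adjMatrix ℝ) u v * (ψ (π u) * ψ (π v))
            = ∑ u, ∑ π ∈ autSet H, ∑ v, (H.adjMatrix ℝ) u v * (ψ (π u) * ψ (π v)) :=
              Finset.sum_congr rfl fun u _ => Finset.sum_comm
          _ = _ := Finset.sum_comm
    _ = ∑ π ∈ autSet H, lam := Finset.sum_congr rfl perpi
    _ = ((autSet H).card : ℝ) * lam := by simp [mul_comm]

end AutKernel

end SpectralFrac

/-- **Lemma.** If `H` is vertex- and edge-transitive with at least one edge, `G` has an
`H`-partition (given by `P`), `X, Y` are real symmetric PSD matrices indexed by `V(G)` with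
`XY = 0` and `X_[u,v] = Y_[u,v]` whenever `{u,v} ∉ E(H)`, then
`‖X‖² ≤ (λ_max(H)/|λ_min(H)|) · ‖Y‖²`. -/
theorem SpectralFrac.frobenius_le_of_conformal {VG W : Type*} [Fintype VG]
    [Fintype W] [DecidableEq W]
    (H : SimpleGraph W) [DecidableRel H.Adj] (G : SimpleGraph VG)
    (hHe : H.edgeSet.Nonempty) (hvt : IsVertexTransitive H) (het : IsEdgeTransitive H)
    (P : VG → W) (X Y : Matrix VG VG ℝ) (hX : X.PosSemidef) (hY : Y.PosSemidef)
    (hXY : X * Y = 0)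
    (hblocks : ∀ u v : W, ¬ H.Adj u v → ∀ a b : VG, P a = u → P b = v → X a b = Y a b) :
    ∑ a, ∑ b, (X a b) ^ 2 ≤ (lamMax H / |lamMin H|) * ∑ a, ∑ b, (Y a b) ^ 2 := by
  classical
  obtain ⟨e, he⟩ := hHe
  obtain ⟨u₀, v₀, h01⟩ : ∃ u v, H.Adj u v := by
    induction e using Sym2.ind with
    | _ x y => exact ⟨x, y, he⟩
  haveI : Nonempty W := ⟨u₀⟩
  have hA := adjMatrix_isHermitian H
  obtain ⟨i₀, -, hi₀⟩ := Finset.exists_min_image (Finset.univ : Finset W) hA.eigenvalues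
    ⟨u₀, Finset.mem_univ _⟩
  have hmin : lamMin H = hA.eigenvalues i₀ :=
    le_antisymm (ciInf_le (Finite.bddBelow_range _) i₀)
      (le_ciInf fun i => hi₀ i (Finset.mem_univ i))
  set ψ : W → ℝ := ⇑(hA.eigenvectorBasis i₀) with hψdef
  have hψeig : H.adjMatrix ℝ *ᵥ ψ = lamMin H • ψ := by
    rw [hmin]; exact hA.mulVec_eigenvectorBasis i₀
  have hψnorm : ∑ u, ψ u * ψ u = 1 := by
    have h1 : ‖hA.eigenvectorBasis i₀‖ = 1 := hA.eigenvectorBasis.orthonormal.1 i₀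
    rw [EuclideanSpace.norm_eq] at h1
    have h2 := Real.sqrt_eq_one.mp h1
    calc ∑ u, ψ u * ψ u = ∑ u, ‖hA.eigenvectorBasis i₀ u‖ ^ 2 :=
          Finset.sum_congr rfl fun u _ => by
            rw [Real.norm_eq_abs, sq_abs, sq]
      _ = 1 := h2
  -- Rayleigh quotient: `lamMin H < 0`
  have hlmin_eq : (⨅ i, hA.eigenvalues i) = lamMin H := rfl
  have hlmax_eq : (⨆ i, hA.eigenvalues i) = lamMax H := rfl
  have hneg : lamMin H < 0 := by
    have h := (rayleigh' hA ((Pi.single u₀ 1 - Pi.single v₀ 1 : W → ℝ))).1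
    rw [hlmin_eq] at h
    have hne : u₀ ≠ v₀ := h01.ne
    have hdv : ((Pi.single u₀ 1 - Pi.single v₀ 1 : W → ℝ)) ⬝ᵥ ((Pi.single u₀ 1 - Pi.single v₀ 1 : W → ℝ))
        = 2 := by
      simp [dotProduct, Pi.single_apply, sub_mul, mul_sub, Finset.sum_sub_distrib,
        Finset.sum_ite_eq', hne, hne.symm]
      norm_num
    have hdA : ((Pi.single u₀ 1 - Pi.single v₀ 1 : W → ℝ)) ⬝ᵥ
        (H.adjMatrix ℝ *ᵥ ((Pi.single u₀ 1 - Pi.single v₀ 1 : W → ℝ))) = -2 := by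
      rw [Matrix.mulVec_sub, Matrix.mulVec_single, Matrix.mulVec_single,
        sub_dotProduct, single_dotProduct, single_dotProduct]
      simp only [Pi.sub_apply, MulOpposite.op_one, one_smul, Matrix.col_apply,
        SimpleGraph.adjMatrix_apply]
      rw [if_neg (H.irrefl), if_neg (H.irrefl), if_pos h01, if_pos h01.symm]
      norm_num
    rw [hdv, hdA] at h
    linarith
  -- edge count
  have hmE_pos : (0:ℝ) < ∑ u, ∑ v, (H.adjMatrix ℝ) u v := by
    refine Finset.sum_pos' (fun u _ => Finset.sum_nonneg fun v _ => ?_)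
      ⟨u₀, Finset.mem_univ _, ?_⟩
    · simp only [SimpleGraph.adjMatrix_apply]; split <;> norm_num
    · refine Finset.sum_pos' (fun v _ => ?_) ⟨v₀, Finset.mem_univ _, ?_⟩
      · simp only [SimpleGraph.adjMatrix_apply]; split <;> norm_num
      · simp [h01]
  have hmE_le : ∑ u, ∑ v, (H.adjMatrix ℝ) u v ≤ lamMax H * (Fintype.card W : ℝ) := by
    have h := (rayleigh' hA (fun _ : W => (1:ℝ))).2
    rw [hlmax_eq] at h
    have h1 : (fun _ : W => (1:ℝ)) ⬝ᵥ (fun _ : W => (1:ℝ)) = (Fintype.card W : ℝ) := by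
      simp [dotProduct]
    have h2 : (fun _ : W => (1:ℝ)) ⬝ᵥ (H.adjMatrix ℝ *ᵥ fun _ : W => (1:ℝ))
        = ∑ u, ∑ v, (H.adjMatrix ℝ) u v := by
      simp [dotProduct, Matrix.mulVec]
    rw [h1, h2] at h
    exact h
  -- symmetry of Y and trace facts
  have hYs : ∀ a b, Y b a = Y a b := by
    intro a b
    conv_lhs => rw [← hY.1]
    simp [Matrix.conjTranspose_apply]
  have hrow : ∀ a, ∑ b, X a b * Y a b = 0 := by
    intro a
    have h0 : (X * Y) a a = 0 := by rw [hXY]; simp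
    rw [Matrix.mul_apply] at h0
    rw [show ∑ b, X a b * Y a b = ∑ b, X a b * Y b a from
      Finset.sum_congr rfl fun b _ => by rw [hYs]]
    exact h0
  have htr : ∑ a, ∑ b, X a b * Y a b = 0 := by
    simp only [hrow]
    simp
  have hXeqY : ∀ a b, ¬ H.Adj (P a) (P b) → X a b = Y a b := fun a b h =>
    hblocks _ _ h a b rfl rfl
  -- rewrite the goal
  rw [abs_of_neg hneg]
  simp only [pow_two]
  set L := - lamMin H with hLdef
  have hL : 0 < L := by rw [hLdef]; linarith
  set mE := ∑ u, ∑ v, (H.adjMatrix ℝ) u v with hmEdef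
  set gC := ((autSet H).card : ℝ) with hgdef
  have hg : 0 < gC := by rw [hgdef]; exact_mod_cast autSet_card_pos
  set nC := ((Fintype.card W : ℕ) : ℝ) with hnCdef
  have hnC : 0 < nC := by rw [hnCdef]; exact_mod_cast Fintype.card_pos
  set nx := ∑ a, ∑ b, X a b * X a b with hnxdef
  set ny := ∑ a, ∑ b, Y a b * Y a b with hnydef
  set tq := ∑ a, ∑ b, (if H.Adj (P a) (P b) then 0 else X a b * X a b) with htqdef
  clear_value L mE gC nC nx ny tq
  have htq0 : 0 ≤ tq := by
    rw [htqdef]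
    refine Finset.sum_nonneg fun a _ => Finset.sum_nonneg fun b _ => ?_
    split
    · exact le_rfl
    · exact mul_self_nonneg _
  have hnx0 : 0 ≤ nx := by
    rw [hnxdef]
    exact Finset.sum_nonneg fun a _ => Finset.sum_nonneg fun b _ => mul_self_nonneg _
  have hny0 : 0 ≤ ny := by
    rw [hnydef]
    exact Finset.sum_nonneg fun a _ => Finset.sum_nonneg fun b _ => mul_self_nonneg _
  -- splitting helper
  have hsplit : ∀ (f : VG → VG → ℝ), ∑ a, ∑ b, f a b
      = (∑ a, ∑ b, (if H.Adj (P a) (P b) then f a b else 0))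
        + (∑ a, ∑ b, (if H.Adj (P a) (P b) then 0 else f a b)) := by
    intro f
    rw [← Finset.sum_add_distrib]
    refine Finset.sum_congr rfl fun a _ => ?_
    rw [← Finset.sum_add_distrib]
    refine Finset.sum_congr rfl fun b _ => ?_
    split <;> simp
  -- edge-block sums
  have hXYedge : ∑ a, ∑ b, (if H.Adj (P a) (P b) then X a b * Y a b else 0) = - tq := by
    have h1 := hsplit (fun a b => X a b * Y a b)
    rw [htr] at h1
    have h2 : ∑ a, ∑ b, (if H.Adj (P a) (P b) then 0 else X a b * Y a b) = tq := by
      rw [htqdef]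
      refine Finset.sum_congr rfl fun a _ => Finset.sum_congr rfl fun b _ => ?_
      by_cases h : H.Adj (P a) (P b)
      · simp [h]
      · rw [if_neg h, if_neg h, hXeqY a b h]
    rw [h2] at h1
    linarith
  have hXedge : ∑ a, ∑ b, (if H.Adj (P a) (P b) then X a b * X a b else 0) = nx - tq := by
    have h1 := hsplit (fun a b => X a b * X a b)
    rw [← hnxdef, ← htqdef] at h1
    linarith
  have hYedge : ∑ a, ∑ b, (if H.Adj (P a) (P b) then Y a b * Y a b else 0) = ny - tq := by
    have h1 := hsplit (fun a b => Y a b * Y a b)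
    rw [← hnydef] at h1
    have h2 : ∑ a, ∑ b, (if H.Adj (P a) (P b) then 0 else Y a b * Y a b) = tq := by
      rw [htqdef]
      refine Finset.sum_congr rfl fun a _ => Finset.sum_congr rfl fun b _ => ?_
      by_cases h : H.Adj (P a) (P b)
      · simp [h]
      · rw [if_neg h, if_neg h, hXeqY a b h]
    rw [h2] at h1
    linarith
  -- Cauchy–Schwarz on the edge blocks
  have hCS : tq * (nx + ny) ≤ nx * ny := by
    have hcs := Finset.sum_mul_sq_le_sq_mul_sq Finset.univ
      (fun p : VG × VG => if H.Adj (P p.1) (P p.2) then X p.1 p.2 else 0)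
      (fun p : VG × VG => if H.Adj (P p.1) (P p.2) then Y p.1 p.2 else 0)
    have c1 : ∑ p : VG × VG, (if H.Adj (P p.1) (P p.2) then X p.1 p.2 else 0)
        * (if H.Adj (P p.1) (P p.2) then Y p.1 p.2 else 0) = - tq := by
      rw [Fintype.sum_prod_type, ← hXYedge]
      refine Finset.sum_congr rfl fun a _ => Finset.sum_congr rfl fun b _ => ?_
      split <;> simp
    have c2 : ∑ p : VG × VG, (if H.Adj (P p.1) (P p.2) then X p.1 p.2 else 0) ^ 2
        = nx - tq := by
      rw [Fintype.sum_prod_type, ← hXedge]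
      refine Finset.sum_congr rfl fun a _ => Finset.sum_congr rfl fun b _ => ?_
      split <;> simp [pow_two]
    have c3 : ∑ p : VG × VG, (if H.Adj (P p.1) (P p.2) then Y p.1 p.2 else 0) ^ 2
        = ny - tq := by
      rw [Fintype.sum_prod_type, ← hYedge]
      refine Finset.sum_congr rfl fun a _ => Finset.sum_congr rfl fun b _ => ?_
      split <;> simp [pow_two]
    rw [c1, c2, c3] at hcs
    nlinarith [hcs]
  -- the two quadratic quantities
  have hξ0 : (0:ℝ) ≤ ∑ a, ∑ b, X a b * X a b * Tker H ψ (P a) (P b) := by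
    calc (0:ℝ) ≤ ∑ π ∈ autSet H, ∑ a, ∑ b, X a b * X a b * (ψ (π (P a)) * ψ (π (P b))) :=
        Finset.sum_nonneg fun π _ => psd_sum_nonneg' hX (fun a => ψ (π (P a)))
      _ = ∑ a, ∑ b, ∑ π ∈ autSet H, X a b * X a b * (ψ (π (P a)) * ψ (π (P b))) :=
        (sum3_comm' _).symm
      _ = ∑ a, ∑ b, X a b * X a b * Tker H ψ (P a) (P b) :=
        Finset.sum_congr rfl fun a _ => Finset.sum_congr rfl fun b _ =>
          (Finset.mul_sum _ _ _).symm
  have hkey : ∀ a b : VG, X a b * X a b * Tker H ψ (P a) (P b)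
      - X a b * Y a b * Tker H ψ (P a) (P b)
      = Tker H ψ u₀ v₀ * (X a b * X a b - X a b * Y a b) := by
    intro a b
    by_cases h : H.Adj (P a) (P b)
    · rw [Tker_edge_const het h h01]; ring
    · rw [hXeqY a b h]; ring
  have hξζ : ∑ a, ∑ b, X a b * X a b * Tker H ψ (P a) (P b)
      = (∑ a, ∑ b, X a b * Y a b * Tker H ψ (P a) (P b)) + Tker H ψ u₀ v₀ * nx := by
    have h1 : ∑ a, ∑ b, X a b * X a b * Tker H ψ (P a) (P b)
        - ∑ a, ∑ b, X a b * Y a b * Tker H ψ (P a) (P b)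
        = ∑ a, ∑ b, (X a b * X a b * Tker H ψ (P a) (P b)
          - X a b * Y a b * Tker H ψ (P a) (P b)) := by
      rw [← Finset.sum_sub_distrib]
      exact Finset.sum_congr rfl fun a _ => (Finset.sum_sub_distrib _ _).symm
    have h2 : ∑ a, ∑ b, (X a b * X a b * Tker H ψ (P a) (P b)
        - X a b * Y a b * Tker H ψ (P a) (P b))
        = Tker H ψ u₀ v₀ * (nx - ∑ a, ∑ b, X a b * Y a b) := by
      rw [Finset.sum_congr rfl fun a _ => Finset.sum_congr rfl fun b _ => hkey a b]
      rw [hnxdef, ← Finset.sum_sub_distrib]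
      rw [Finset.mul_sum]
      refine Finset.sum_congr rfl fun a _ => ?_
      rw [← Finset.sum_sub_distrib, Finset.mul_sum]
    rw [htr] at h2
    rw [h2] at h1
    linarith
  -- upper bound on the mixed quantity
  have hζle : ∑ a, ∑ b, X a b * Y a b * Tker H ψ (P a) (P b)
      ≤ gC / nC * tq + (- Tker H ψ u₀ v₀) * tq := by
    have hEdgePart : ∑ a, ∑ b,
        (if H.Adj (P a) (P b) then X a b * Y a b * Tker H ψ (P a) (P b) else 0)
        = - (Tker H ψ u₀ v₀ * tq) := by
      have h1 : ∀ a b : VG,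
          (if H.Adj (P a) (P b) then X a b * Y a b * Tker H ψ (P a) (P b) else 0)
          = Tker H ψ u₀ v₀ * (if H.Adj (P a) (P b) then X a b * Y a b else 0) := by
        intro a b
        by_cases h : H.Adj (P a) (P b)
        · rw [if_pos h, if_pos h, Tker_edge_const het h h01]; ring
        · rw [if_neg h, if_neg h]; ring
      rw [Finset.sum_congr rfl fun a _ => Finset.sum_congr rfl fun b _ => h1 a b]
      rw [show ∑ a, ∑ b, Tker H ψ u₀ v₀ * (if H.Adj (P a) (P b) then X a b * Y a b else 0)
          = Tker H ψ u₀ v₀ * ∑ a, ∑ b, (if H.Adj (P a) (P b) then X a b * Y a b else 0) from by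
        rw [Finset.mul_sum]
        exact Finset.sum_congr rfl fun a _ => (Finset.mul_sum _ _ _).symm]
      rw [hXYedge]
      ring
    have hNonPart : ∑ a, ∑ b,
        (if H.Adj (P a) (P b) then 0 else X a b * Y a b * Tker H ψ (P a) (P b))
        ≤ gC / nC * tq := by
      have h1 : ∀ a b : VG,
          (if H.Adj (P a) (P b) then 0 else X a b * Y a b * Tker H ψ (P a) (P b))
          ≤ (if H.Adj (P a) (P b) then 0 else X a b * X a b * (gC / nC)) := by
        intro a b
        by_cases h : H.Adj (P a) (P b)
        · rw [if_pos h, if_pos h]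
        · rw [if_neg h, if_neg h, ← hXeqY a b h, hgdef, hnCdef]
          exact mul_le_mul_of_nonneg_left (Tker_le hvt hψnorm _ _) (mul_self_nonneg _)
      calc ∑ a, ∑ b, (if H.Adj (P a) (P b) then 0 else X a b * Y a b * Tker H ψ (P a) (P b))
          ≤ ∑ a, ∑ b, (if H.Adj (P a) (P b) then 0 else X a b * X a b * (gC / nC)) :=
            Finset.sum_le_sum fun a _ => Finset.sum_le_sum fun b _ => h1 a b
        _ = ∑ a, ∑ b, (if H.Adj (P a) (P b) then 0 else X a b * X a b) * (gC / nC) := by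
            refine Finset.sum_congr rfl fun a _ => Finset.sum_congr rfl fun b _ => ?_
            split <;> simp
        _ = tq * (gC / nC) := by
            rw [htqdef, Finset.sum_mul]
            exact Finset.sum_congr rfl fun a _ => (Finset.sum_mul _ _ _).symm
        _ = gC / nC * tq := mul_comm _ _
    have hζsplit := hsplit (fun a b => X a b * Y a b * Tker H ψ (P a) (P b))
    rw [hζsplit, hEdgePart]
    linarith [hNonPart]
  -- the eigenvalue equation for the edge constant
  have hτval : mE * Tker H ψ u₀ v₀ = gC * lamMin H := by
    have h1 := Tker_edge_sum (H := H) hψeig hψnorm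
    have h2 : ∑ u, ∑ v, (H.adjMatrix ℝ) u v * Tker H ψ u v
        = ∑ u, ∑ v, (H.adjMatrix ℝ) u v * Tker H ψ u₀ v₀ := by
      refine Finset.sum_congr rfl fun u _ => Finset.sum_congr rfl fun v _ => ?_
      by_cases h : H.Adj u v
      · rw [Tker_edge_const het h h01]
      · simp [SimpleGraph.adjMatrix_apply, h]
    have h3 : ∑ u, ∑ v, (H.adjMatrix ℝ) u v * Tker H ψ u₀ v₀ = mE * Tker H ψ u₀ v₀ := by
      rw [hmEdef, Finset.sum_mul]
      exact Finset.sum_congr rfl fun u _ => (Finset.sum_mul _ _ _).symm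
    rw [← h3, ← h2, h1, hgdef]
  have hτneg : - Tker H ψ u₀ v₀ = gC * L / mE := by
    rw [eq_div_iff (ne_of_gt hmE_pos), hLdef]
    linear_combination - hτval
  have hmain : (- Tker H ψ u₀ v₀) * nx ≤ gC / nC * tq + (- Tker H ψ u₀ v₀) * tq := by
    have h9 := hξ0
    rw [hξζ] at h9
    linarith only [hζle, h9]
  have key1 : L * nC * nx ≤ mE * tq + L * nC * tq := by
    rw [hτneg] at hmain
    have h4 : gC * L / mE * nx * (mE * nC)
        ≤ (gC / nC * tq + gC * L / mE * tq) * (mE * nC) :=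
      mul_le_mul_of_nonneg_right hmain (by positivity)
    have h5 : gC * L / mE * nx * (mE * nC) = gC * (L * nC * nx) := by
      field_simp
    have h6 : (gC / nC * tq + gC * L / mE * tq) * (mE * nC)
        = gC * (mE * tq + L * nC * tq) := by
      field_simp
    rw [h5, h6] at h4
    exact le_of_mul_le_mul_left h4 hg
  -- final arithmetic
  have hΛpos : 0 < lamMax H := by
    by_contra hcon
    push_neg at hcon
    have hc2 : lamMax H * nC ≤ 0 := mul_nonpos_iff.mpr (Or.inr ⟨hcon, hnC.le⟩)
    linarith
  rcases eq_or_lt_of_le hnx0 with h0 | hnxpos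
  · rw [← h0]
    exact mul_nonneg (div_nonneg hΛpos.le hL.le) hny0
  · have k1a : L * nC * nx ≤ tq * (mE + L * nC) := by
      rw [show tq * (mE + L * nC) = mE * tq + L * nC * tq from by ring]
      exact key1
    have k2 : L * nC * nx * (nx + ny) ≤ tq * (mE + L * nC) * (nx + ny) :=
      mul_le_mul_of_nonneg_right k1a (add_nonneg hnx0 hny0)
    have k3 : tq * (nx + ny) * (mE + L * nC) ≤ nx * ny * (mE + L * nC) :=
      mul_le_mul_of_nonneg_right hCS
        (add_nonneg hmE_pos.le (mul_nonneg hL.le hnC.le))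
    have k4 : L * nC * nx * (nx + ny) ≤ nx * ny * (mE + L * nC) :=
      le_trans k2 (le_of_eq_of_le
        (by ring : tq * (mE + L * nC) * (nx + ny) = tq * (nx + ny) * (mE + L * nC)) k3)
    have k5 : L * nC * (nx + ny) ≤ ny * (mE + L * nC) := by
      have h7 : nx * (L * nC * (nx + ny)) ≤ nx * (ny * (mE + L * nC)) := by
        calc nx * (L * nC * (nx + ny)) = L * nC * nx * (nx + ny) := by ring
          _ ≤ nx * ny * (mE + L * nC) := k4
          _ = nx * (ny * (mE + L * nC)) := by ring
      exact le_of_mul_le_mul_left h7 hnxpos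
    have k6 : L * nC * nx ≤ ny * mE := by linarith only [k5]
    have k7 : ny * mE ≤ ny * (lamMax H * nC) := mul_le_mul_of_nonneg_left hmE_le hny0
    have k8 : L * nx ≤ lamMax H * ny := by
      have h8 : (L * nx) * nC ≤ (lamMax H * ny) * nC := by linarith only [k6, k7]
      exact le_of_mul_le_mul_right h8 hnC
    rw [div_mul_eq_mul_div, le_div_iff₀ hL]
    linarith only [k8]
end
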